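/- arXiv:2101.01970 — 10 statements merged into one kernel-verified Lean document; each statement's English description precedes it below -/
import Mathlib

section
/- If k_d, k_o : [0,T] → ℝ are differentiable and solve the scaled Riccati system, then the function s(t) := k_d(t) + α(N) k_o(t) satisfies −s'(t) = 1 − s(t)²/ν for all t ∈ [0,T] and s(T) = 0. -/
open Set

/-- If `k_d, k_o` solve the scaled Riccati system, then
`s(t) = k_d(t) + α(N) k_o(t)` with `α(N) = (N-1)/N` satisfies
`−s'(t) = 1 − s(t)²/ν` on `[0,T]` and `s(T) = 0`. -/
theorem weighted_riccati_combination (N : ℕ) (hN : 1 ≤ N) (T ν p : ℝ)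
    (hT : 0 < T) (hν : 0 < ν) (kd ko : ℝ → ℝ)
    (hkd : ∀ t ∈ Icc (0:ℝ) T, HasDerivAt kd
        (-(-2 * p * (((N : ℝ) - 1) / N) * (kd t - ko t / N)
            - (1 / ν) * ((kd t) ^ 2 + ((((N : ℝ) - 1) / N) / N) * (ko t) ^ 2) + 1)) t)
    (hkdT : kd T = 0)
    (hko : ∀ t ∈ Icc (0:ℝ) T, HasDerivAt ko
        (-(2 * p * (kd t - ko t / N)
            - (1 / ν) * (2 * kd t * ko t + (((N : ℝ) - 1) / N) * (ko t) ^ 2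
                - (ko t) ^ 2 / N))) t)
    (hkoT : ko T = 0) :
    (∀ t ∈ Icc (0:ℝ) T,
        HasDerivAt (fun s => kd s + (((N : ℝ) - 1) / N) * ko s)
          (-(1 - (kd t + (((N : ℝ) - 1) / N) * ko t) ^ 2 / ν)) t)
      ∧ kd T + (((N : ℝ) - 1) / N) * ko T = 0 := by
  constructor
  · intro t ht
    have h1 := hkd t ht
    have h2 := (hko t ht).const_mul (((N : ℝ) - 1) / N)
    have h := h1.add h2
    refine h.congr_deriv ?_
    have hν' : ν ≠ 0 := ne_of_gt hν
    have hN' : (N : ℝ) ≠ 0 := Nat.cast_ne_zero.mpr (by omega)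
    field_simp
    ring
  · simp [hkdT, hkoT]
end

section
/- Let k_d, k_o : [0,T] → ℝ be differentiable solutions of the scaled Riccati system and let w_1,…,w_N : [0,T] → ℝ^d be differentiable functions solving the controlled linear system. Then the empirical variance σ²(t) = (1/N) Σ_{j=1}^N |w_j(t) − m(t)|², where m(t) = (1/N) Σ_{j=1}^N w_j(t), satisfies (σ²)'(t) = −2(p̄ + (k_d(t) − k_o(t)/N)/ν) σ²(t) for all t ∈ [0,T], and consequently σ²(t) = σ²(0) · exp(−2p̄ t − (2/ν) ∫₀ᵗ (k_d(s) − k_o(s)/N) ds). -/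
open Set

/-- For the Riccati-controlled linear system, the empirical variance
`σ²(t) = (1/N) Σ_j ‖w_j(t) − m(t)‖²` satisfies
`(σ²)'(t) = −2(p̄ + (k_d(t) − k_o(t)/N)/ν) σ²(t)` and consequently
`σ²(t) = σ²(0) exp(−2p̄t − (2/ν)∫₀ᵗ (k_d − k_o/N))`. -/
theorem controlled_linear_variance_decay (N d : ℕ) (hN : 1 ≤ N) (hd : 1 ≤ d)
    (T ν p : ℝ) (hT : 0 < T) (hν : 0 < ν) (kd ko : ℝ → ℝ)
    (hkd : ∀ t ∈ Icc (0:ℝ) T, HasDerivAt kd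
        (-(-2 * p * (((N : ℝ) - 1) / N) * (kd t - ko t / N)
            - (1 / ν) * ((kd t) ^ 2 + ((((N : ℝ) - 1) / N) / N) * (ko t) ^ 2) + 1)) t)
    (hkdT : kd T = 0)
    (hko : ∀ t ∈ Icc (0:ℝ) T, HasDerivAt ko
        (-(2 * p * (kd t - ko t / N)
            - (1 / ν) * (2 * kd t * ko t + (((N : ℝ) - 1) / N) * (ko t) ^ 2
                - (ko t) ^ 2 / N))) t)
    (hkoT : ko T = 0)
    (w : Fin N → ℝ → EuclideanSpace ℝ (Fin d))
    (hw : ∀ t ∈ Icc (0:ℝ) T, ∀ i : Fin N,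
        HasDerivAt (w i)
          ((p - ko t / ν) • ((N : ℝ)⁻¹ • ∑ j, w j t)
            - (p + kd t / ν - ko t / (ν * N)) • w i t) t)
    (σ2 : ℝ → ℝ)
    (hσ2 : ∀ t, σ2 t = (N : ℝ)⁻¹ * ∑ j, ‖w j t - (N : ℝ)⁻¹ • ∑ k, w k t‖ ^ 2) :
    (∀ t ∈ Icc (0:ℝ) T,
        HasDerivAt σ2 (-2 * (p + (kd t - ko t / N) / ν) * σ2 t) t)
      ∧ ∀ t ∈ Icc (0:ℝ) T,
        σ2 t = σ2 0 * Real.exp (-2 * p * t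
            - (2 / ν) * ∫ s in (0:ℝ)..t, (kd s - ko s / N)) := by
  have hN' : (0:ℝ) < N := by exact_mod_cast Nat.lt_of_lt_of_le Nat.zero_lt_one hN
  have hNne : (N:ℝ) ≠ 0 := ne_of_gt hN'
  have hνne : ν ≠ 0 := ne_of_gt hν
  have key : ∀ t ∈ Icc (0:ℝ) T,
      HasDerivAt σ2 (-2 * (p + (kd t - ko t / N) / ν) * σ2 t) t := by
    intro t ht
    set b : ℝ := p + kd t / ν - ko t / (ν * N) with hbdef
    have hsum : HasDerivAt (fun s => ∑ j, w j s)
        (∑ j, ((p - ko t / ν) • ((N : ℝ)⁻¹ • ∑ k, w k t) - b • w j t)) t :=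
      HasDerivAt.fun_sum (fun i _ => hw t ht i)
    have hm : HasDerivAt (fun s => (N:ℝ)⁻¹ • ∑ j, w j s)
        (((p - ko t / ν) - b) • ((N:ℝ)⁻¹ • ∑ j, w j t)) t := by
      have h2 := hsum.const_smul ((N:ℝ)⁻¹)
      refine h2.congr_deriv ?_
      rw [Finset.sum_sub_distrib, Finset.sum_const, Finset.card_univ, Fintype.card_fin,
          ← Finset.smul_sum, ← Nat.cast_smul_eq_nsmul ℝ]
      match_scalars <;> (field_simp; try ring)
    have hv : ∀ i : Fin N, HasDerivAt (fun s => w i s - (N:ℝ)⁻¹ • ∑ k, w k s)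
        ((-b) • (w i t - (N:ℝ)⁻¹ • ∑ k, w k t)) t := by
      intro i
      have h3 := (hw t ht i).sub hm
      refine h3.congr_deriv ?_
      module
    have hn : ∀ i : Fin N, HasDerivAt (fun s => ‖w i s - (N:ℝ)⁻¹ • ∑ k, w k s‖ ^ 2)
        (-2 * b * ‖w i t - (N:ℝ)⁻¹ • ∑ k, w k t‖ ^ 2) t := by
      intro i
      have h4 := HasDerivAt.inner ℝ (hv i) (hv i)
      simp only [real_inner_smul_left, real_inner_smul_right,
        real_inner_self_eq_norm_sq] at h4
      refine h4.congr_deriv ?_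
      ring
    have hS : HasDerivAt (fun s => (N:ℝ)⁻¹ * ∑ j, ‖w j s - (N:ℝ)⁻¹ • ∑ k, w k s‖ ^ 2)
        ((N:ℝ)⁻¹ * ∑ j, (-2 * b * ‖w j t - (N:ℝ)⁻¹ • ∑ k, w k t‖ ^ 2)) t :=
      (HasDerivAt.fun_sum fun i _ => hn i).const_mul _
    have hfun : σ2 = fun s => (N:ℝ)⁻¹ * ∑ j, ‖w j s - (N:ℝ)⁻¹ • ∑ k, w k s‖ ^ 2 :=
      funext hσ2
    rw [hfun]
    convert hS using 1
    rw [← Finset.mul_sum]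
    have hb2 : -2 * (p + (kd t - ko t / ↑N) / ν) = -2 * b := by
      rw [hbdef]; field_simp; ring
    rw [hb2]; ring
  refine ⟨key, ?_⟩
  have hclampmem : ∀ s : ℝ, max 0 (min s T) ∈ Icc (0:ℝ) T :=
    fun s => ⟨le_max_left _ _, max_le hT.le (min_le_right _ _)⟩
  have hclampc : Continuous fun s : ℝ => max 0 (min s T) :=
    continuous_const.max (continuous_id.min continuous_const)
  have hkdc : ContinuousOn kd (Icc 0 T) :=
    fun x hx => ((hkd x hx).continuousAt).continuousWithinAt
  have hkoc : ContinuousOn ko (Icc 0 T) :=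
    fun x hx => ((hko x hx).continuousAt).continuousWithinAt
  set f : ℝ → ℝ := fun s => kd (max 0 (min s T)) - ko (max 0 (min s T)) / N with hf
  have hfc : Continuous f := by
    have h1 : Continuous fun s => kd (max 0 (min s T)) :=
      hkdc.comp_continuous hclampc hclampmem
    have h2 : Continuous fun s => ko (max 0 (min s T)) :=
      hkoc.comp_continuous hclampc hclampmem
    exact h1.sub (h2.div_const _)
  set G : ℝ → ℝ := fun u => ∫ s in (0:ℝ)..u, f s with hG
  have hGd : ∀ u : ℝ, HasDerivAt G (f u) u := fun u =>
    intervalIntegral.integral_hasDerivAt_right (hfc.intervalIntegrable _ _)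
      hfc.stronglyMeasurable.stronglyMeasurableAtFilter hfc.continuousAt
  have hclampeq : ∀ s ∈ Icc (0:ℝ) T, max 0 (min s T) = s := by
    intro s hs
    rw [min_eq_left hs.2, max_eq_right hs.1]
  have hh : ∀ t ∈ Icc (0:ℝ) T,
      HasDerivAt (fun u => σ2 u * Real.exp (2*p*u + (2/ν) * G u)) 0 t := by
    intro t ht
    have hlin : HasDerivAt (fun u : ℝ => 2*p*u) (2*p) t := by
      simpa using (hasDerivAt_id t).const_mul (2*p)
    have hexp : HasDerivAt (fun u => 2*p*u + (2/ν) * G u) (2*p + (2/ν) * f t) t :=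
      hlin.add ((hGd t).const_mul (2/ν))
    have hE : HasDerivAt (fun u => Real.exp (2*p*u + (2/ν) * G u))
        (Real.exp (2*p*t + (2/ν) * G t) * (2*p + (2/ν) * f t)) t :=
      (Real.hasDerivAt_exp _).comp t hexp
    have h5 := (key t ht).mul hE
    refine h5.congr_deriv ?_
    have hft : f t = kd t - ko t / N := by
      simp only [hf, hclampeq t ht]
    rw [hft]
    field_simp
    ring
  have hconst := constant_of_has_deriv_right_zero
    (f := fun u => σ2 u * Real.exp (2*p*u + (2/ν) * G u)) (a := 0) (b := T)
    (fun x hx => ((hh x hx).continuousAt).continuousWithinAt)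
    (fun x hx => (hh x (Ico_subset_Icc_self hx)).hasDerivWithinAt)
  intro t ht
  have hG0 : G 0 = 0 := intervalIntegral.integral_same
  have hct : σ2 t * Real.exp (2*p*t + (2/ν) * G t)
      = σ2 0 * Real.exp (2*p*0 + (2/ν) * G 0) := hconst t ht
  rw [hG0] at hct
  simp only [mul_zero, zero_add, add_zero, Real.exp_zero, mul_one] at hct
  have hGint : G t = ∫ s in (0:ℝ)..t, (kd s - ko s / N) := by
    apply intervalIntegral.integral_congr
    intro s hs
    rw [uIcc_of_le ht.1] at hs
    have hsI : s ∈ Icc (0:ℝ) T := ⟨hs.1, hs.2.trans ht.2⟩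
    simp only [hf, hclampeq s hsI]
  have hexpne : Real.exp (2*p*t + (2/ν) * G t) ≠ 0 := Real.exp_ne_zero _
  have hexpeq : -2 * p * t - (2 / ν) * ∫ s in (0:ℝ)..t, (kd s - ko s / N)
      = -(2*p*t + (2/ν) * G t) := by
    rw [hGint]; ring
  rw [hexpeq, Real.exp_neg, ← div_eq_mul_inv, eq_div_iff hexpne]
  exact hct
end

section
/- Assume P : ℝ^d × ℝ^d → ℝ is continuous and symmetric, i.e. P(v,w) = P(w,v) for all v,w. Let k_d, k_o solve the scaled Riccati system and let differentiable functions v_1,…,v_N, w_1,…,w_N : [0,T] → ℝ^d solve the open-loop coupled system with w_i(0) = v_i(0) for all i. Then the empirical means m_v(t) = (1/N) Σ_{j=1}^N v_j(t) and m_w(t) = (1/N) Σ_{j=1}^N w_j(t) coincide for all t ∈ [0,T], and m_v'(t) = −(1/ν)(k_d(t) + α(N) k_o(t)) m_v(t) for all t ∈ [0,T]. -/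
open Set

lemma sum_antisymm {E : Type*} [AddCommGroup E] [Module ℝ E] {n : ℕ}
    (f : Fin n → Fin n → E) (h : ∀ i j, f j i = - f i j) :
    ∑ i, ∑ j, f i j = 0 := by
  have h1 : ∑ i, ∑ j, f i j = ∑ j, ∑ i, f i j := Finset.sum_comm
  have h2 : ∑ j : Fin n, ∑ i : Fin n, f i j = - ∑ i, ∑ j, f i j := by
    rw [← Finset.sum_neg_distrib]
    refine Finset.sum_congr rfl fun j _ => ?_
    rw [← Finset.sum_neg_distrib]
    exact Finset.sum_congr rfl fun i _ => h j i
  have h3 : (2:ℝ) • (∑ i, ∑ j, f i j) = 0 := by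
    rw [two_smul]; nth_rewrite 1 [h1]; rw [h2]; abel
  have := smul_eq_zero.1 h3
  simpa using this


/-- For the open-loop coupled system with matching initial data,
the empirical means of the nonlinear and linearized states coincide on `[0,T]`,
and satisfy `m_v'(t) = −(1/ν)(k_d(t) + α(N) k_o(t)) m_v(t)`. -/
theorem open_loop_mean (N d : ℕ) (hN : 1 ≤ N) (hd : 1 ≤ d)
    (T ν p : ℝ) (hT : 0 < T) (hν : 0 < ν)
    (P : EuclideanSpace ℝ (Fin d) → EuclideanSpace ℝ (Fin d) → ℝ)
    (hPcont : Continuous fun q : EuclideanSpace ℝ (Fin d) × EuclideanSpace ℝ (Fin d) =>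
      P q.1 q.2)
    (hPsymm : ∀ v w, P v w = P w v)
    (kd ko : ℝ → ℝ)
    (hkd : ∀ t ∈ Icc (0:ℝ) T, HasDerivAt kd
        (-(-2 * p * (((N : ℝ) - 1) / N) * (kd t - ko t / N)
            - (1 / ν) * ((kd t) ^ 2 + ((((N : ℝ) - 1) / N) / N) * (ko t) ^ 2) + 1)) t)
    (hkdT : kd T = 0)
    (hko : ∀ t ∈ Icc (0:ℝ) T, HasDerivAt ko
        (-(2 * p * (kd t - ko t / N)
            - (1 / ν) * (2 * kd t * ko t + (((N : ℝ) - 1) / N) * (ko t) ^ 2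
                - (ko t) ^ 2 / N))) t)
    (hkoT : ko T = 0)
    (v w : Fin N → ℝ → EuclideanSpace ℝ (Fin d))
    (hv : ∀ t ∈ Icc (0:ℝ) T, ∀ i : Fin N,
        HasDerivAt (v i)
          ((N : ℝ)⁻¹ • ∑ j, P (v i t) (v j t) • (v j t - v i t)
            + (-(1 / ν)) • ((kd t - ko t / N) • w i t + (ko t / N) • ∑ j, w j t)) t)
    (hw : ∀ t ∈ Icc (0:ℝ) T, ∀ i : Fin N,
        HasDerivAt (w i)
          ((N : ℝ)⁻¹ • ∑ j, p • (w j t - w i t)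
            + (-(1 / ν)) • ((kd t - ko t / N) • w i t + (ko t / N) • ∑ j, w j t)) t)
    (hinit : ∀ i, w i 0 = v i 0) :
    (∀ t ∈ Icc (0:ℝ) T, (N : ℝ)⁻¹ • ∑ j, v j t = (N : ℝ)⁻¹ • ∑ j, w j t)
      ∧ ∀ t ∈ Icc (0:ℝ) T,
        HasDerivAt (fun s => (N : ℝ)⁻¹ • ∑ j, v j s)
          ((-(1 / ν) * (kd t + (((N : ℝ) - 1) / N) * ko t))
            • ((N : ℝ)⁻¹ • ∑ j, v j t)) t := by
  have hNne : (N:ℝ) ≠ 0 := by positivity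
  set c : ℝ → ℝ := fun t => -(1/ν) * (kd t + (((N:ℝ) - 1) / N) * ko t) with hc
  -- derivative of the sum of w
  have hSw : ∀ t ∈ Icc (0:ℝ) T, HasDerivAt (fun s => ∑ j, w j s)
      (c t • ∑ j, w j t) t := by
    intro t ht
    have h := HasDerivAt.fun_sum (fun i (_ : i ∈ Finset.univ) => hw t ht i)
    refine h.congr_deriv (Eq.symm ?_)
    have hzero : ∑ i : Fin N, ∑ j : Fin N, p • (w j t - w i t) = 0 := by
      apply sum_antisymm
      intro i j
      rw [← smul_neg, neg_sub]
    rw [Finset.sum_add_distrib, ← Finset.smul_sum, hzero, smul_zero, zero_add,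
      ← Finset.smul_sum, Finset.sum_add_distrib, ← Finset.smul_sum,
      Finset.sum_const, Finset.card_fin]
    rw [← Nat.cast_smul_eq_nsmul ℝ, smul_smul, ← add_smul, smul_smul]
    congr 1
    simp only [hc]
    field_simp
    ring
  -- derivative of the sum of v
  have hSv : ∀ t ∈ Icc (0:ℝ) T, HasDerivAt (fun s => ∑ j, v j s)
      (c t • ∑ j, w j t) t := by
    intro t ht
    have h := HasDerivAt.fun_sum (fun i (_ : i ∈ Finset.univ) => hv t ht i)
    refine h.congr_deriv (Eq.symm ?_)
    have hzero : ∑ i : Fin N, ∑ j : Fin N, P (v i t) (v j t) • (v j t - v i t) = 0 := by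
      apply sum_antisymm
      intro i j
      rw [hPsymm, ← smul_neg, neg_sub]
    rw [Finset.sum_add_distrib, ← Finset.smul_sum, hzero, smul_zero, zero_add,
      ← Finset.smul_sum, Finset.sum_add_distrib, ← Finset.smul_sum,
      Finset.sum_const, Finset.card_fin]
    rw [← Nat.cast_smul_eq_nsmul ℝ, smul_smul, ← add_smul, smul_smul]
    congr 1
    simp only [hc]
    field_simp
    ring
  -- the difference of means is constant
  have hgderiv : ∀ t ∈ Icc (0:ℝ) T,
      HasDerivAt (fun s => (N:ℝ)⁻¹ • ∑ j, v j s - (N:ℝ)⁻¹ • ∑ j, w j s)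
        (0 : EuclideanSpace ℝ (Fin d)) t := by
    intro t ht
    have h1 := ((hSv t ht).const_smul ((N:ℝ)⁻¹)).sub ((hSw t ht).const_smul ((N:ℝ)⁻¹))
    exact h1.congr_deriv (by simp)
  have hg0 : (N:ℝ)⁻¹ • ∑ j, v j 0 - (N:ℝ)⁻¹ • (∑ j, w j 0) = 0 := by
    rw [sub_eq_zero]
    congr 1
    exact Finset.sum_congr rfl fun j _ => (hinit j).symm
  have hgconst : ∀ t ∈ Icc (0:ℝ) T,
      (N:ℝ)⁻¹ • ∑ j, v j t - (N:ℝ)⁻¹ • ∑ j, w j t = 0 := by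
    intro t ht
    have hcont : ContinuousOn (fun s => (N:ℝ)⁻¹ • ∑ j, v j s - (N:ℝ)⁻¹ • ∑ j, w j s)
        (Icc (0:ℝ) T) := fun s hs => ((hgderiv s hs).continuousAt).continuousWithinAt
    have hder : ∀ s ∈ Ico (0:ℝ) T,
        HasDerivWithinAt (fun s => (N:ℝ)⁻¹ • ∑ j, v j s - (N:ℝ)⁻¹ • ∑ j, w j s)
          (0 : EuclideanSpace ℝ (Fin d)) (Ici s) s := fun s hs =>
      (hgderiv s (Ico_subset_Icc_self hs)).hasDerivWithinAt
    have h2 := constant_of_has_deriv_right_zero hcont hder t ht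
    rw [h2]
    exact hg0
  have heq : ∀ t ∈ Icc (0:ℝ) T, (N:ℝ)⁻¹ • ∑ j, v j t = (N:ℝ)⁻¹ • ∑ j, w j t := by
    intro t ht
    exact sub_eq_zero.1 (hgconst t ht)
  refine ⟨heq, fun t ht => ?_⟩
  have h := (hSv t ht).const_smul ((N:ℝ)⁻¹)
  have hrw : ((N:ℝ)⁻¹) • (c t • ∑ j, w j t) = c t • ((N:ℝ)⁻¹ • ∑ j, v j t) := by
    rw [heq t ht, smul_comm]
  rw [hrw] at h
  exact h
end

section
/- Assume P : ℝ^d × ℝ^d → ℝ is continuous and symmetric, i.e. P(v,w) = P(w,v) for all v,w. Let k_d, k_o solve the scaled Riccati system and let differentiable functions v_1,…,v_N, w_1,…,w_N : [0,T] → ℝ^d solve the open-loop coupled system. Then the empirical variance σ_v²(t) = (1/N) Σ_{j=1}^N |v_j(t) − m_v(t)|², with m_v(t) = (1/N) Σ_{j=1}^N v_j(t), satisfies for all t ∈ [0,T]: (σ_v²)'(t) = −(1/N²) Σ_{i=1}^N Σ_{j=1}^N P(v_i(t),v_j(t)) |v_i(t) − v_j(t)|² − (2/ν)(k_d(t) −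 k_o(t)/N) · C(t), where C(t) = (1/N) Σ_{j=1}^N (v_j(t) − m_v(t)) · (w_j(t) − m_w(t)) is the empirical covariance and m_w(t) = (1/N) Σ_{j=1}^N w_j(t). -/
open Set
open scoped RealInnerProductSpace

/-- For the open-loop coupled system, the empirical variance of the
nonlinear state satisfies
`(σ_v²)'(t) = −(1/N²) Σ_i Σ_j P(v_i,v_j)‖v_i − v_j‖² − (2/ν)(k_d − k_o/N)·C(t)`,
where `C(t)` is the empirical covariance of the nonlinear and linear states. -/
theorem open_loop_variance_evolution (N d : ℕ) (hN : 1 ≤ N) (hd : 1 ≤ d)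
    (T ν p : ℝ) (hT : 0 < T) (hν : 0 < ν)
    (P : EuclideanSpace ℝ (Fin d) → EuclideanSpace ℝ (Fin d) → ℝ)
    (hPcont : Continuous fun q : EuclideanSpace ℝ (Fin d) × EuclideanSpace ℝ (Fin d) =>
      P q.1 q.2)
    (hPsymm : ∀ v w, P v w = P w v)
    (kd ko : ℝ → ℝ)
    (hkd : ∀ t ∈ Icc (0:ℝ) T, HasDerivAt kd
        (-(-2 * p * (((N : ℝ) - 1) / N) * (kd t - ko t / N)
            - (1 / ν) * ((kd t) ^ 2 + ((((N : ℝ) - 1) / N) / N) * (ko t) ^ 2) + 1)) t)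
    (hkdT : kd T = 0)
    (hko : ∀ t ∈ Icc (0:ℝ) T, HasDerivAt ko
        (-(2 * p * (kd t - ko t / N)
            - (1 / ν) * (2 * kd t * ko t + (((N : ℝ) - 1) / N) * (ko t) ^ 2
                - (ko t) ^ 2 / N))) t)
    (hkoT : ko T = 0)
    (v w : Fin N → ℝ → EuclideanSpace ℝ (Fin d))
    (hv : ∀ t ∈ Icc (0:ℝ) T, ∀ i : Fin N,
        HasDerivAt (v i)
          ((N : ℝ)⁻¹ • ∑ j, P (v i t) (v j t) • (v j t - v i t)
            + (-(1 / ν)) • ((kd t - ko t / N) • w i t + (ko t / N) • ∑ j, w j t)) t)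
    (hw : ∀ t ∈ Icc (0:ℝ) T, ∀ i : Fin N,
        HasDerivAt (w i)
          ((N : ℝ)⁻¹ • ∑ j, p • (w j t - w i t)
            + (-(1 / ν)) • ((kd t - ko t / N) • w i t + (ko t / N) • ∑ j, w j t)) t)
    (mv mw : ℝ → EuclideanSpace ℝ (Fin d))
    (hmv : ∀ t, mv t = (N : ℝ)⁻¹ • ∑ j, v j t)
    (hmw : ∀ t, mw t = (N : ℝ)⁻¹ • ∑ j, w j t)
    (σ2v : ℝ → ℝ) (hσ2v : ∀ t, σ2v t = (N : ℝ)⁻¹ * ∑ j, ‖v j t - mv t‖ ^ 2)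
    (C : ℝ → ℝ) (hC : ∀ t, C t = (N : ℝ)⁻¹ * ∑ j, ⟪v j t - mv t, w j t - mw t⟫) :
    ∀ t ∈ Icc (0:ℝ) T,
      HasDerivAt σ2v
        (-(((N : ℝ) ^ 2)⁻¹ * ∑ i, ∑ j, P (v i t) (v j t) * ‖v i t - v j t‖ ^ 2)
          - (2 / ν) * (kd t - ko t / N) * C t) t := by
  intro t ht
  have hn0 : (N : ℝ) ≠ 0 := Nat.cast_ne_zero.mpr (by omega)
  set Dv : Fin N → EuclideanSpace ℝ (Fin d) := fun i =>
    (N : ℝ)⁻¹ • ∑ j, P (v i t) (v j t) • (v j t - v i t)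
      + (-(1 / ν)) • ((kd t - ko t / N) • w i t + (ko t / N) • ∑ j, w j t) with hDvdef
  have hvi : ∀ i, HasDerivAt (v i) (Dv i) t := fun i => hv t ht i
  have hmv' : HasDerivAt mv ((N : ℝ)⁻¹ • ∑ j, Dv j) t := by
    have h := (HasDerivAt.fun_sum (fun j (_ : j ∈ Finset.univ) => hvi j)).const_smul ((N : ℝ)⁻¹)
    have : mv = fun s => (N : ℝ)⁻¹ • ∑ j, v j s := funext hmv
    rw [this]
    exact h
  set D : Fin N → EuclideanSpace ℝ (Fin d) := fun j => Dv j - (N : ℝ)⁻¹ • ∑ k, Dv k with hDdef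
  have hxj : ∀ j : Fin N, HasDerivAt (fun s => v j s - mv s) (D j) t :=
    fun j => (hvi j).sub hmv'
  have hsq : ∀ j : Fin N, HasDerivAt (fun s => (⟪v j s - mv s, v j s - mv s⟫ : ℝ))
      (⟪v j t - mv t, D j⟫ + ⟪D j, v j t - mv t⟫) t :=
    fun j => (hxj j).inner ℝ (hxj j)
  have hσ' : HasDerivAt σ2v
      ((N : ℝ)⁻¹ * ∑ j, (⟪v j t - mv t, D j⟫ + ⟪D j, v j t - mv t⟫)) t := by
    have hfun : σ2v = fun s => (N : ℝ)⁻¹ * ∑ j, (⟪v j s - mv s, v j s - mv s⟫ : ℝ) := by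
      funext s
      rw [hσ2v s]
      congr 1
      exact Finset.sum_congr rfl fun j _ => (real_inner_self_eq_norm_sq _).symm
    rw [hfun]
    exact (HasDerivAt.fun_sum (fun j (_ : j ∈ Finset.univ) => hsq j)).const_mul _
  -- vanishing of centered sums
  have hsumx : ∑ j : Fin N, (v j t - mv t) = 0 := by
    have h1 : (N : ℝ) • mv t = ∑ j, v j t := by
      rw [hmv t, smul_smul, mul_inv_cancel₀ hn0, one_smul]
    rw [Finset.sum_sub_distrib, Finset.sum_const, Finset.card_univ, Fintype.card_fin,
      ← Nat.cast_smul_eq_nsmul ℝ, h1, sub_self]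
  have hinner0 : ∀ c : EuclideanSpace ℝ (Fin d),
      ∑ j, (⟪v j t - mv t, c⟫ : ℝ) = 0 := by
    intro c
    rw [← sum_inner, hsumx, inner_zero_left]
  -- reduce to the uncentered derivatives
  have hDsum : ∑ j, (⟪v j t - mv t, D j⟫ : ℝ) = ∑ j, ⟪v j t - mv t, Dv j⟫ := by
    have : ∀ j ∈ Finset.univ, (⟪v j t - mv t, D j⟫ : ℝ)
        = ⟪v j t - mv t, Dv j⟫ - ⟪v j t - mv t, (N : ℝ)⁻¹ • ∑ k, Dv k⟫ := by
      intro j _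
      rw [hDdef]
      exact inner_sub_right _ _ _
    rw [Finset.sum_congr rfl this, Finset.sum_sub_distrib, hinner0, sub_zero]
  have hDvj : ∀ j : Fin N, (⟪v j t - mv t, Dv j⟫ : ℝ)
      = (N : ℝ)⁻¹ * ∑ k, P (v j t) (v k t) * ⟪v j t - mv t, v k t - v j t⟫
        + (-(1 / ν)) * ((kd t - ko t / N) * ⟪v j t - mv t, w j t⟫
          + (ko t / N) * ⟪v j t - mv t, ∑ k, w k t⟫) := by
    intro j
    rw [hDvdef]
    simp only [inner_add_right, real_inner_smul_right, inner_sum]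
  have hbw : ∑ j, (⟪v j t - mv t, w j t⟫ : ℝ)
      = ∑ j, ⟪v j t - mv t, w j t - mw t⟫ := by
    have h1 : ∀ j ∈ Finset.univ, (⟪v j t - mv t, w j t⟫ : ℝ)
        = ⟪v j t - mv t, w j t - mw t⟫ + ⟪v j t - mv t, mw t⟫ := by
      intro j _
      rw [inner_sub_right]
      ring
    rw [Finset.sum_congr rfl h1, Finset.sum_add_distrib, hinner0, add_zero]
  -- symmetrization of the interaction term
  have hkey : ∀ u u' : EuclideanSpace ℝ (Fin d),
      (⟪u - mv t, u' - u⟫ : ℝ) + ⟪u' - mv t, u - u'⟫ = -‖u - u'‖ ^ 2 := by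
    intro u u'
    rw [← real_inner_self_eq_norm_sq]
    simp only [inner_sub_left, inner_sub_right]
    rw [real_inner_comm u' u]
    ring
  have hswap : ∑ j, ∑ k, P (v j t) (v k t) * (⟪v j t - mv t, v k t - v j t⟫ : ℝ)
      = ∑ j, ∑ k, P (v j t) (v k t) * ⟪v k t - mv t, v j t - v k t⟫ := by
    rw [Finset.sum_comm]
    exact Finset.sum_congr rfl fun j _ => Finset.sum_congr rfl fun k _ => by
      rw [hPsymm (v j t) (v k t)]
  have hS1 : ∑ j, ∑ k, P (v j t) (v k t) * (⟪v j t - mv t, v k t - v j t⟫ : ℝ)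
      = -(1 / 2) * ∑ j, ∑ k, P (v j t) (v k t) * ‖v j t - v k t‖ ^ 2 := by
    have h2 : (∑ j, ∑ k, P (v j t) (v k t) * (⟪v j t - mv t, v k t - v j t⟫ : ℝ))
        + ∑ j, ∑ k, P (v j t) (v k t) * (⟪v k t - mv t, v j t - v k t⟫ : ℝ)
        = ∑ j, ∑ k, P (v j t) (v k t) * (-‖v j t - v k t‖ ^ 2) := by
      rw [← Finset.sum_add_distrib]
      refine Finset.sum_congr rfl fun j _ => ?_
      rw [← Finset.sum_add_distrib]
      refine Finset.sum_congr rfl fun k _ => ?_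
      rw [← mul_add, hkey]
    rw [← hswap] at h2
    have h3 : ∑ j, ∑ k, P (v j t) (v k t) * (-‖v j t - v k t‖ ^ 2)
        = -(∑ j, ∑ k, P (v j t) (v k t) * ‖v j t - v k t‖ ^ 2) := by
      rw [← Finset.sum_neg_distrib]
      refine Finset.sum_congr rfl fun j _ => ?_
      rw [← Finset.sum_neg_distrib]
      exact Finset.sum_congr rfl fun k _ => by ring
    rw [h3] at h2
    linarith
  -- total covariance
  have hCov : ∑ j, (⟪v j t - mv t, w j t - mw t⟫ : ℝ) = (N : ℝ) * C t := by
    rw [hC t]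
    field_simp
  -- assemble
  have e2 : ∑ j, (⟪v j t - mv t, Dv j⟫ : ℝ)
      = (N : ℝ)⁻¹ * (∑ j, ∑ k, P (v j t) (v k t) * ⟪v j t - mv t, v k t - v j t⟫)
        - (1 / ν) * (kd t - ko t / N) * ((N : ℝ) * C t) := by
    rw [Finset.sum_congr rfl fun j _ => hDvj j, Finset.sum_add_distrib,
      ← Finset.mul_sum, ← Finset.mul_sum, Finset.sum_add_distrib,
      ← Finset.mul_sum, ← Finset.mul_sum, hinner0, hbw, hCov]
    ring
  have hval : (N : ℝ)⁻¹ * ∑ j, ((⟪v j t - mv t, D j⟫ : ℝ) + ⟪D j, v j t - mv t⟫)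
      = -(((N : ℝ) ^ 2)⁻¹ * ∑ i, ∑ j, P (v i t) (v j t) * ‖v i t - v j t‖ ^ 2)
        - (2 / ν) * (kd t - ko t / N) * C t := by
    have e1 : ∑ j, ((⟪v j t - mv t, D j⟫ : ℝ) + ⟪D j, v j t - mv t⟫)
        = 2 * ∑ j, (⟪v j t - mv t, D j⟫ : ℝ) := by
      have h1 : ∀ j ∈ (Finset.univ : Finset (Fin N)),
          (⟪v j t - mv t, D j⟫ : ℝ) + ⟪D j, v j t - mv t⟫
            = 2 * ⟪v j t - mv t, D j⟫ := by
        intro j _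
        rw [real_inner_comm (D j) (v j t - mv t)]
        ring
      rw [Finset.sum_congr rfl h1, ← Finset.mul_sum]
    rw [e1, hDsum, e2, hS1]
    field_simp
  exact hval ▸ hσ'
end

section
/- Assume P : ℝ^d × ℝ^d → ℝ is continuous and symmetric, i.e. P(v,w) = P(w,v) for all v,w. Let k_d, k_o solve the scaled Riccati system and let differentiable functions v_1,…,v_N : [0,T] → ℝ^d solve the closed-loop system. Then the empirical mean m(t) = (1/N) Σ_{j=1}^N v_j(t) satisfies m'(t) = −(1/ν)(k_d(t) + α(N) k_o(t)) m(t) for all t ∈ [0,T], and consequently m(t) = m(0) · exp(−(1/ν) ∫₀ᵗ (k_d(s) + α(N) k_o(s)) ds). -/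
open Set

/-- For the closed-loop system with symmetric interaction kernel,
the empirical mean satisfies `m'(t) = −(1/ν)(k_d(t) + α(N) k_o(t)) m(t)` and hence
`m(t) = m(0) exp(−(1/ν)∫₀ᵗ (k_d + α(N) k_o))`. -/
theorem closed_loop_mean (N d : ℕ) (hN : 1 ≤ N) (hd : 1 ≤ d)
    (T ν p : ℝ) (hT : 0 < T) (hν : 0 < ν)
    (P : EuclideanSpace ℝ (Fin d) → EuclideanSpace ℝ (Fin d) → ℝ)
    (hPcont : Continuous fun q : EuclideanSpace ℝ (Fin d) × EuclideanSpace ℝ (Fin d) =>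
      P q.1 q.2)
    (hPsymm : ∀ v w, P v w = P w v)
    (kd ko : ℝ → ℝ)
    (hkd : ∀ t ∈ Icc (0:ℝ) T, HasDerivAt kd
        (-(-2 * p * (((N : ℝ) - 1) / N) * (kd t - ko t / N)
            - (1 / ν) * ((kd t) ^ 2 + ((((N : ℝ) - 1) / N) / N) * (ko t) ^ 2) + 1)) t)
    (hkdT : kd T = 0)
    (hko : ∀ t ∈ Icc (0:ℝ) T, HasDerivAt ko
        (-(2 * p * (kd t - ko t / N)
            - (1 / ν) * (2 * kd t * ko t + (((N : ℝ) - 1) / N) * (ko t) ^ 2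
                - (ko t) ^ 2 / N))) t)
    (hkoT : ko T = 0)
    (v : Fin N → ℝ → EuclideanSpace ℝ (Fin d))
    (hv : ∀ t ∈ Icc (0:ℝ) T, ∀ i : Fin N,
        HasDerivAt (v i)
          ((N : ℝ)⁻¹ • ∑ j, P (v i t) (v j t) • (v j t - v i t)
            + (-(1 / ν)) • ((kd t - ko t / N) • v i t + (ko t / N) • ∑ j, v j t)) t)
    (m : ℝ → EuclideanSpace ℝ (Fin d))
    (hm : ∀ t, m t = (N : ℝ)⁻¹ • ∑ j, v j t) :
    (∀ t ∈ Icc (0:ℝ) T,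
        HasDerivAt m
          ((-(1 / ν) * (kd t + (((N : ℝ) - 1) / N) * ko t)) • m t) t)
      ∧ ∀ t ∈ Icc (0:ℝ) T,
        m t = Real.exp (-(1 / ν) * ∫ s in (0:ℝ)..t,
            (kd s + (((N : ℝ) - 1) / N) * ko s)) • m 0 := by
  have hN0 : (N : ℝ) ≠ 0 := by positivity
  have hν0 : ν ≠ 0 := ne_of_gt hν
  have hmfun : m = fun t => (N : ℝ)⁻¹ • ∑ j, v j t := funext hm
  -- Part 1
  have part1 : ∀ t ∈ Icc (0:ℝ) T,
      HasDerivAt m ((-(1 / ν) * (kd t + (((N : ℝ) - 1) / N) * ko t)) • m t) t := by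
    intro t ht
    have hS0 : (∑ i : Fin N, ∑ j : Fin N, P (v i t) (v j t) • (v j t - v i t)) = 0 := by
      set S := ∑ i : Fin N, ∑ j : Fin N, P (v i t) (v j t) • (v j t - v i t) with hSdef
      have hkey : ∀ i j : Fin N,
          P (v j t) (v i t) • (v i t - v j t) = -(P (v i t) (v j t) • (v j t - v i t)) := by
        intro i j
        rw [hPsymm (v j t) (v i t), ← smul_neg, neg_sub]
      have hneg : S = -S := by
        calc S = ∑ j : Fin N, ∑ i : Fin N, P (v i t) (v j t) • (v j t - v i t) :=
              Finset.sum_comm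
          _ = ∑ i : Fin N, ∑ j : Fin N, -(P (v i t) (v j t) • (v j t - v i t)) := by
              refine Finset.sum_congr rfl fun i _ => Finset.sum_congr rfl fun j _ => ?_
              exact hkey i j
          _ = -S := by simp [hSdef]
      have h2 : (2 : ℝ) • S = 0 := by
        rw [two_smul]
        nth_rewrite 2 [hneg]
        simp
      rcases smul_eq_zero.mp h2 with h | h
      · norm_num at h
      · exact h
    have hsum : HasDerivAt (fun τ => ∑ j, v j τ)
        (∑ i : Fin N, ((N : ℝ)⁻¹ • ∑ j, P (v i t) (v j t) • (v j t - v i t)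
            + (-(1 / ν)) • ((kd t - ko t / N) • v i t + (ko t / N) • ∑ j, v j t))) t :=
      HasDerivAt.fun_sum fun i _ => hv t ht i
    have h1 : HasDerivAt m
        ((N : ℝ)⁻¹ • ∑ i : Fin N, ((N : ℝ)⁻¹ • ∑ j, P (v i t) (v j t) • (v j t - v i t)
            + (-(1 / ν)) • ((kd t - ko t / N) • v i t + (ko t / N) • ∑ j, v j t))) t := by
      rw [hmfun]
      exact hsum.fun_const_smul _
    have heq : (N : ℝ)⁻¹ • ∑ i : Fin N, ((N : ℝ)⁻¹ • ∑ j, P (v i t) (v j t) • (v j t - v i t)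
            + (-(1 / ν)) • ((kd t - ko t / N) • v i t + (ko t / N) • ∑ j, v j t))
        = (-(1 / ν) * (kd t + (((N : ℝ) - 1) / N) * ko t)) • m t := by
      rw [Finset.sum_add_distrib, ← Finset.smul_sum, hS0, smul_zero, zero_add,
        ← Finset.smul_sum, Finset.sum_add_distrib, Finset.sum_const, Finset.card_univ,
        Fintype.card_fin, ← Nat.cast_smul_eq_nsmul ℝ, hm t]
      rw [← Finset.smul_sum]
      match_scalars
      field_simp
      ring
    exact heq ▸ h1
  refine ⟨part1, ?_⟩
  -- Part 2
  set f : ℝ → ℝ := fun s => kd s + (((N : ℝ) - 1) / N) * ko s with hfdef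
  have hTmem : (0:ℝ) ≤ T := le_of_lt hT
  have hfca : ∀ s ∈ Icc (0:ℝ) T, ContinuousAt f s := fun s hs =>
    ((hkd s hs).continuousAt.add (((hko s hs).continuousAt).const_mul _))
  have hfco : ContinuousOn f (Icc 0 T) := fun s hs => (hfca s hs).continuousWithinAt
  have hfmeas : MeasureTheory.AEStronglyMeasurable f
      (MeasureTheory.volume.restrict (Icc (0:ℝ) T)) :=
    hfco.aestronglyMeasurable measurableSet_Icc
  set F : ℝ → ℝ := fun t => ∫ s in (0:ℝ)..t, f s with hFdef
  have hFcont : ContinuousOn F (Icc 0 T) := by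
    have := intervalIntegral.continuousOn_primitive_interval (a := (0:ℝ)) (b := T)
      (μ := MeasureTheory.volume) (f := f) (by rw [uIcc_of_le hTmem]; exact hfco.integrableOn_Icc)
    rwa [uIcc_of_le hTmem] at this
  have hFderiv : ∀ x ∈ Ico (0:ℝ) T, HasDerivWithinAt F (f x) (Ici x) x := by
    intro x hx
    have hsub : uIcc (0:ℝ) x ⊆ Icc 0 T := by
      rw [uIcc_of_le hx.1]
      exact Icc_subset_Icc le_rfl (le_of_lt hx.2)
    have hint : IntervalIntegrable f MeasureTheory.volume 0 x :=
      (hfco.mono hsub).intervalIntegrable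
    have hIcc_mem : Icc (0:ℝ) T ∈ nhdsWithin x (Ioi x) := by
      refine mem_nhdsWithin.mpr ⟨Iio T, isOpen_Iio, hx.2, ?_⟩
      intro y hy
      exact ⟨le_trans hx.1 (le_of_lt hy.2), le_of_lt hy.1⟩
    have hmeas' : StronglyMeasurableAtFilter f (nhdsWithin x (Ioi x)) :=
      ⟨Icc 0 T, hIcc_mem, hfmeas⟩
    exact intervalIntegral.integral_hasDerivWithinAt_right hint hmeas'
      ((hfca x ⟨hx.1, le_of_lt hx.2⟩).continuousWithinAt)
  have hgderiv : ∀ x ∈ Ico (0:ℝ) T,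
      HasDerivWithinAt (fun t => Real.exp ((1 / ν) * F t) • m t) 0 (Ici x) x := by
    intro x hx
    have hxIcc : x ∈ Icc (0:ℝ) T := ⟨hx.1, le_of_lt hx.2⟩
    have hE : HasDerivWithinAt (fun t => Real.exp ((1 / ν) * F t))
        (Real.exp ((1 / ν) * F x) * ((1 / ν) * f x)) (Ici x) x :=
      ((hFderiv x hx).const_mul (1 / ν)).exp
    have hmx : HasDerivWithinAt m
        ((-(1 / ν) * (kd x + (((N : ℝ) - 1) / N) * ko x)) • m x) (Ici x) x :=
      (part1 x hxIcc).hasDerivWithinAt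
    have hfx : f x = kd x + (((N : ℝ) - 1) / N) * ko x := rfl
    have h0 : Real.exp ((1 / ν) * F x) • ((-(1 / ν) * (kd x + (((N : ℝ) - 1) / N) * ko x)) • m x)
        + (Real.exp ((1 / ν) * F x) * ((1 / ν) * f x)) • m x = 0 := by
      rw [smul_smul, ← add_smul]
      have hz : Real.exp ((1 / ν) * F x) * (-(1 / ν) * (kd x + (((N : ℝ) - 1) / N) * ko x))
          + Real.exp ((1 / ν) * F x) * ((1 / ν) * f x) = 0 := by
        rw [hfx]; ring
      rw [hz, zero_smul]
    have hs := hE.smul hmx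
    rw [h0] at hs
    exact hs
  have hgcont : ContinuousOn (fun t => Real.exp ((1 / ν) * F t) • m t) (Icc 0 T) := by
    have hmcont : ContinuousOn m (Icc 0 T) := fun s hs =>
      (part1 s hs).continuousAt.continuousWithinAt
    exact (Real.continuous_exp.comp_continuousOn (continuousOn_const.mul hFcont)).smul hmcont
  have hconst := constant_of_has_deriv_right_zero hgcont hgderiv
  intro t ht
  have hgt := hconst t ht
  have hF0 : F 0 = 0 := intervalIntegral.integral_same
  simp only [hF0, mul_zero, Real.exp_zero, one_smul] at hgt
  show m t = Real.exp (-(1 / ν) * F t) • m 0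
  have hexp : Real.exp (-(1 / ν) * F t) * Real.exp ((1 / ν) * F t) = 1 := by
    rw [← Real.exp_add]
    norm_num
  calc m t = (Real.exp (-(1 / ν) * F t) * Real.exp ((1 / ν) * F t)) • m t := by
        rw [hexp, one_smul]
    _ = Real.exp (-(1 / ν) * F t) • (Real.exp ((1 / ν) * F t) • m t) := mul_smul _ _ _
    _ = Real.exp (-(1 / ν) * F t) • m 0 := by rw [hgt]
end

section
/- Assume P : ℝ^d × ℝ^d → ℝ is continuous and symmetric, i.e. P(v,w) = P(w,v) for all v,w. Let k_d, k_o solve the scaled Riccati system and let differentiable functions v_1,…,v_N : [0,T] → ℝ^d solve the closed-loop system. Then the empirical variance σ²(t) = (1/N) Σ_{j=1}^N |v_j(t) − m(t)|², with m(t) = (1/N) Σ_{j=1}^N v_j(t), satisfies for all t ∈ [0,T]: (σ²)'(t) = −(1/N²) Σ_{i=1}^N Σ_{j=1}^N P(v_i(t),v_j(t)) |v_i(t) − v_j(t)|² − (2/ν)(k_d(t) − k_o(t)/N) σ²(t). -/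
open Set

open RealInnerProductSpace in
lemma variance_algebra_aux {N : ℕ} (hNne : (N:ℝ) ≠ 0)
    {E : Type*} [NormedAddCommGroup E] [InnerProductSpace ℝ E]
    (P : E → E → ℝ) (hPsymm : ∀ x y, P x y = P y x)
    (a : Fin N → E) (c e r : ℝ)
    (b : E) (hb : b = (N:ℝ)⁻¹ • ∑ j, a j)
    (V : Fin N → E)
    (hV : ∀ i, V i = (N:ℝ)⁻¹ • ∑ j, P (a i) (a j) • (a j - a i)
      + (-r) • (c • a i + e • ∑ j, a j))
    (M : E) (hM : M = (N:ℝ)⁻¹ • ∑ j, V j)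
    (s : ℝ) (hs : s = (N:ℝ)⁻¹ * ∑ j, ‖a j - b‖^2) :
    (N:ℝ)⁻¹ * ∑ j, (⟪a j - b, V j - M⟫ + ⟪V j - M, a j - b⟫)
      = -(((N:ℝ)^2)⁻¹ * ∑ i, ∑ j, P (a i) (a j) * ‖a i - a j‖^2) - 2 * r * c * s := by
  have hsumw : ∑ j, (a j - b) = 0 := by
    rw [Finset.sum_sub_distrib, Finset.sum_const, Finset.card_univ, Fintype.card_fin, hb,
        ← Nat.cast_smul_eq_nsmul ℝ, smul_smul, mul_inv_cancel₀ hNne, one_smul, sub_self]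
  have hA : ∀ x : E, ∑ j, ⟪a j - b, x⟫ = 0 := fun x => by
    rw [← sum_inner, hsumw, inner_zero_left]
  have h1 : ∑ j, (⟪a j - b, V j - M⟫ + ⟪V j - M, a j - b⟫)
      = 2 * ∑ j, ⟪a j - b, V j⟫ := by
    have e1 : ∀ j : Fin N, ⟪a j - b, V j - M⟫ + ⟪V j - M, a j - b⟫
        = 2 * ⟪a j - b, V j⟫ - 2 * ⟪a j - b, M⟫ := fun j => by
      rw [real_inner_comm (a j - b) (V j - M), inner_sub_right]; ring
    rw [Finset.sum_congr rfl fun j _ => e1 j, Finset.sum_sub_distrib,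
        ← Finset.mul_sum, ← Finset.mul_sum, hA M, mul_zero, sub_zero]
  have hVj : ∀ j, ⟪a j - b, V j⟫
      = (N:ℝ)⁻¹ * ∑ i, P (a j) (a i) * ⟪a j - b, a i - a j⟫
        + (-r * c) * ⟪a j - b, a j⟫ + (-r * e) * ⟪a j - b, ∑ i, a i⟫ := fun j => by
    rw [hV j]
    simp only [inner_add_right, real_inner_smul_right, inner_sum]
    ring
  have h2 : ∑ j, ⟪a j - b, V j⟫
      = (N:ℝ)⁻¹ * ∑ j, ∑ i, P (a j) (a i) * ⟪a j - b, a i - a j⟫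
        + (-r * c) * ∑ j, ⟪a j - b, a j⟫ := by
    rw [Finset.sum_congr rfl fun j _ => hVj j, Finset.sum_add_distrib, Finset.sum_add_distrib,
        ← Finset.mul_sum, ← Finset.mul_sum, ← Finset.mul_sum, hA, mul_zero, add_zero]
  have hB : ∑ j, ⟪a j - b, a j⟫ = ∑ j, ‖a j - b‖^2 := by
    have e2 : ∀ j : Fin N, ⟪a j - b, a j⟫ = ‖a j - b‖^2 + ⟪a j - b, b⟫ := fun j => by
      have h := inner_sub_right (𝕜 := ℝ) (a j - b) (a j) b
      rw [real_inner_self_eq_norm_sq] at h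
      linarith
    rw [Finset.sum_congr rfl fun j _ => e2 j, Finset.sum_add_distrib, hA b, add_zero]
  have hSym : ∑ j, ∑ i, P (a j) (a i) * ⟪a j - b, a i - a j⟫
      = -(1/2) * ∑ i, ∑ j, P (a i) (a j) * ‖a i - a j‖^2 := by
    have hswap : ∑ j, ∑ i, P (a j) (a i) * ⟪a j - b, a i - a j⟫
        = ∑ j, ∑ i, P (a j) (a i) * ⟪a i - b, a j - a i⟫ := by
      rw [Finset.sum_comm]
      exact Finset.sum_congr rfl fun x _ => Finset.sum_congr rfl fun y _ => by
        rw [hPsymm (a x) (a y)]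
    have hpt : ∀ x y : Fin N, ⟪a x - b, a y - a x⟫ + ⟪a y - b, a x - a y⟫
        = -(‖a x - a y‖^2) := fun x y => by
      have h := inner_sub_left (𝕜 := ℝ) (a x - b) (a y - b) (a y - a x)
      have hxy : (a x - b) - (a y - b) = a x - a y := by abel
      rw [hxy] at h
      have h3 : ⟪a x - a y, a y - a x⟫ = -(‖a x - a y‖^2) := by
        rw [show a y - a x = -(a x - a y) by abel, inner_neg_right,
            real_inner_self_eq_norm_sq]
      rw [h3] at h
      have h4 : ⟪a y - b, a x - a y⟫ = -⟪a y - b, a y - a x⟫ := by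
        rw [show a x - a y = -(a y - a x) by abel, inner_neg_right]
      rw [h4]
      linarith
    have hcomb : ∑ j, ∑ i, P (a j) (a i) * ⟪a j - b, a i - a j⟫
         + ∑ j, ∑ i, P (a j) (a i) * ⟪a i - b, a j - a i⟫
        = ∑ j, ∑ i, P (a j) (a i) * (-(‖a j - a i‖^2)) := by
      rw [← Finset.sum_add_distrib]
      refine Finset.sum_congr rfl fun j _ => ?_
      rw [← Finset.sum_add_distrib]
      refine Finset.sum_congr rfl fun i _ => ?_
      rw [← mul_add, hpt j i]
    rw [← hswap] at hcomb
    have hneg : ∑ j, ∑ i, P (a j) (a i) * (-(‖a j - a i‖^2))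
        = -∑ i, ∑ j, P (a i) (a j) * ‖a i - a j‖^2 := by
      simp [mul_neg]
    rw [hneg] at hcomb
    linarith
  have hsum : ∑ j, ‖a j - b‖^2 = (N:ℝ) * s := by
    rw [hs, ← mul_assoc, mul_inv_cancel₀ hNne, one_mul]
  rw [h1, h2, hB, hSym, hsum]
  field_simp
  ring

open RealInnerProductSpace in
/-- For the closed-loop system with symmetric interaction kernel,
the empirical variance satisfies
`(σ²)'(t) = −(1/N²) Σ_i Σ_j P(v_i,v_j)‖v_i − v_j‖² − (2/ν)(k_d − k_o/N) σ²(t)`. -/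
theorem closed_loop_variance_evolution (N d : ℕ) (hN : 1 ≤ N) (hd : 1 ≤ d)
    (T ν p : ℝ) (hT : 0 < T) (hν : 0 < ν)
    (P : EuclideanSpace ℝ (Fin d) → EuclideanSpace ℝ (Fin d) → ℝ)
    (hPcont : Continuous fun q : EuclideanSpace ℝ (Fin d) × EuclideanSpace ℝ (Fin d) =>
      P q.1 q.2)
    (hPsymm : ∀ v w, P v w = P w v)
    (kd ko : ℝ → ℝ)
    (hkd : ∀ t ∈ Icc (0:ℝ) T, HasDerivAt kd
        (-(-2 * p * (((N : ℝ) - 1) / N) * (kd t - ko t / N)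
            - (1 / ν) * ((kd t) ^ 2 + ((((N : ℝ) - 1) / N) / N) * (ko t) ^ 2) + 1)) t)
    (hkdT : kd T = 0)
    (hko : ∀ t ∈ Icc (0:ℝ) T, HasDerivAt ko
        (-(2 * p * (kd t - ko t / N)
            - (1 / ν) * (2 * kd t * ko t + (((N : ℝ) - 1) / N) * (ko t) ^ 2
                - (ko t) ^ 2 / N))) t)
    (hkoT : ko T = 0)
    (v : Fin N → ℝ → EuclideanSpace ℝ (Fin d))
    (hv : ∀ t ∈ Icc (0:ℝ) T, ∀ i : Fin N,
        HasDerivAt (v i)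
          ((N : ℝ)⁻¹ • ∑ j, P (v i t) (v j t) • (v j t - v i t)
            + (-(1 / ν)) • ((kd t - ko t / N) • v i t + (ko t / N) • ∑ j, v j t)) t)
    (m : ℝ → EuclideanSpace ℝ (Fin d))
    (hm : ∀ t, m t = (N : ℝ)⁻¹ • ∑ j, v j t)
    (σ2 : ℝ → ℝ) (hσ2 : ∀ t, σ2 t = (N : ℝ)⁻¹ * ∑ j, ‖v j t - m t‖ ^ 2) :
    ∀ t ∈ Icc (0:ℝ) T,
      HasDerivAt σ2
        (-(((N : ℝ) ^ 2)⁻¹ * ∑ i, ∑ j, P (v i t) (v j t) * ‖v i t - v j t‖ ^ 2)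
          - (2 / ν) * (kd t - ko t / N) * σ2 t) t := by
  intro t ht
  have hNne : (N : ℝ) ≠ 0 := Nat.cast_ne_zero.mpr (by omega)
  set V : Fin N → EuclideanSpace ℝ (Fin d) := fun i =>
    (N : ℝ)⁻¹ • ∑ j, P (v i t) (v j t) • (v j t - v i t)
      + (-(1 / ν)) • ((kd t - ko t / N) • v i t + (ko t / N) • ∑ j, v j t) with hVdef
  have hvi : ∀ i, HasDerivAt (v i) (V i) t := fun i => hv t ht i
  have hmfun : m = fun s => (N : ℝ)⁻¹ • ∑ j, v j s := funext hm
  have hM : HasDerivAt m ((N : ℝ)⁻¹ • ∑ j, V j) t := by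
    rw [hmfun]
    exact (HasDerivAt.fun_sum fun j _ => hvi j).const_smul ((N : ℝ)⁻¹)
  have hσfun : σ2 = fun s => (N : ℝ)⁻¹ * ∑ j, ⟪v j s - m s, v j s - m s⟫ := by
    funext s
    rw [hσ2 s]
    congr 1
    exact Finset.sum_congr rfl fun j _ => (real_inner_self_eq_norm_sq _).symm
  have hder : HasDerivAt σ2
      ((N : ℝ)⁻¹ * ∑ j, (⟪v j t - m t, V j - (N : ℝ)⁻¹ • ∑ k, V k⟫
        + ⟪V j - (N : ℝ)⁻¹ • ∑ k, V k, v j t - m t⟫)) t := by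
    rw [hσfun]
    exact (HasDerivAt.fun_sum fun j _ =>
      (HasDerivAt.inner ℝ ((hvi j).sub hM) ((hvi j).sub hM))).const_mul _
  have key : (N : ℝ)⁻¹ * ∑ j, (⟪v j t - m t, V j - (N : ℝ)⁻¹ • ∑ k, V k⟫
        + ⟪V j - (N : ℝ)⁻¹ • ∑ k, V k, v j t - m t⟫)
      = -(((N:ℝ)^2)⁻¹ * ∑ i, ∑ j, P (v i t) (v j t) * ‖v i t - v j t‖^2)
        - 2 * (1/ν) * (kd t - ko t / N) * σ2 t :=
    variance_algebra_aux hNne P hPsymm (fun i => v i t) (kd t - ko t / N) (ko t / N) (1/ν)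
      (m t) (hm t) V (fun i => rfl) ((N : ℝ)⁻¹ • ∑ k, V k) rfl (σ2 t) (hσ2 t)
  have hfin : -(((N : ℝ) ^ 2)⁻¹ * ∑ i, ∑ j, P (v i t) (v j t) * ‖v i t - v j t‖ ^ 2)
      - (2 / ν) * (kd t - ko t / N) * σ2 t
      = (N : ℝ)⁻¹ * ∑ j, (⟪v j t - m t, V j - (N : ℝ)⁻¹ • ∑ k, V k⟫
        + ⟪V j - (N : ℝ)⁻¹ • ∑ k, V k, v j t - m t⟫) := by
    rw [key]; ring
  rw [hfin]
  exact hder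
end

section
/- Let T > 0, ν > 0, a ≥ 0, let k_d, β : [0,T] → ℝ be continuous and nonnegative, and let σ : [0,T] → ℝ be differentiable with σ(t) > 0 for all t ∈ [0,T] and σ'(t) ≤ 2a σ(t) + (2/ν) k_d(t) β(t) √(σ(0)) √(σ(t)) for all t ∈ [0,T]. Then for all t ∈ [0,T]: σ(t) ≤ σ(0) e^{2at} (1 + (1/ν) ∫₀ᵗ e^{−as} k_d(s) β(s) ds)². -/
open Set

/-- Comparison estimate (upper variance bound for the open-loop
Riccati control): if `σ' ≤ 2aσ + (2/ν) k_d β √(σ(0)) √σ` on `[0,T]` with `σ > 0`,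
then `σ(t) ≤ σ(0) e^{2at} (1 + (1/ν)∫₀ᵗ e^{−as} k_d(s) β(s) ds)²`. -/
theorem open_loop_upper_comparison (T ν a : ℝ) (hT : 0 < T) (hν : 0 < ν) (ha : 0 ≤ a)
    (kd β : ℝ → ℝ)
    (hkdc : ContinuousOn kd (Icc 0 T)) (hkd0 : ∀ t ∈ Icc (0:ℝ) T, 0 ≤ kd t)
    (hβc : ContinuousOn β (Icc 0 T)) (hβ0 : ∀ t ∈ Icc (0:ℝ) T, 0 ≤ β t)
    (σ : ℝ → ℝ)
    (hσd : ∀ t ∈ Icc (0:ℝ) T, DifferentiableAt ℝ σ t)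
    (hσpos : ∀ t ∈ Icc (0:ℝ) T, 0 < σ t)
    (hineq : ∀ t ∈ Icc (0:ℝ) T,
        deriv σ t ≤ 2 * a * σ t
          + (2 / ν) * kd t * β t * Real.sqrt (σ 0) * Real.sqrt (σ t)) :
    ∀ t ∈ Icc (0:ℝ) T,
      σ t ≤ σ 0 * Real.exp (2 * a * t)
        * (1 + (1 / ν) * ∫ s in (0:ℝ)..t, Real.exp (-a * s) * kd s * β s) ^ 2 := by
  set g : ℝ → ℝ := fun s => Real.exp (-a * s) * kd s * β s with hg
  have hgc : ContinuousOn g (Icc 0 T) := by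
    exact (((Real.continuous_exp.comp (continuous_const.mul continuous_id)).continuousOn).mul
      hkdc).mul hβc
  have h0T : (0:ℝ) ∈ Icc (0:ℝ) T := ⟨le_refl 0, hT.le⟩
  have hσ0 : 0 < σ 0 := hσpos 0 h0T
  set s0 : ℝ := Real.sqrt (σ 0) with hs0
  have hs0pos : 0 < s0 := Real.sqrt_pos.mpr hσ0
  -- F t = s0 * (1 + (1/ν) ∫₀ᵗ g) - √(σ t) e^{-at}
  set F : ℝ → ℝ := fun t =>
    s0 * (1 + (1 / ν) * ∫ s in (0:ℝ)..t, g s) - Real.sqrt (σ t) * Real.exp (-a * t) with hF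
  -- continuity of F on Icc
  have hσc : ContinuousOn σ (Icc 0 T) := fun t ht => (hσd t ht).continuousAt.continuousWithinAt
  have hint : MeasureTheory.IntegrableOn g (uIcc (0:ℝ) T) := by
    rw [uIcc_of_le hT.le]
    exact hgc.integrableOn_compact isCompact_Icc
  have hprim : ContinuousOn (fun t => ∫ s in (0:ℝ)..t, g s) (Icc 0 T) := by
    have := intervalIntegral.continuousOn_primitive_interval (a := (0:ℝ)) (b := T)
      (f := g) (μ := MeasureTheory.volume) hint
    rwa [uIcc_of_le hT.le] at this
  have hFc : ContinuousOn F (Icc 0 T) := by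
    apply ContinuousOn.sub
    · exact continuousOn_const.mul (continuousOn_const.add (continuousOn_const.mul hprim))
    · exact ((Real.continuous_sqrt.comp_continuousOn hσc)).mul
        ((Real.continuous_exp.comp (continuous_const.mul continuous_id)).continuousOn)
  -- derivative of F at interior points
  have hderiv : ∀ t ∈ Ioo (0:ℝ) T, HasDerivAt F
      (s0 * (1 / ν * g t) -
        ((1 / (2 * Real.sqrt (σ t))) * deriv σ t * Real.exp (-a * t)
          + Real.sqrt (σ t) * (Real.exp (-a * t) * (-a)))) t := by
    intro t ht
    have htIcc : t ∈ Icc (0:ℝ) T := Ioo_subset_Icc_self ht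
    have hnbd : Icc (0:ℝ) T ∈ nhds t := by
      exact Filter.mem_of_superset (isOpen_Ioo.mem_nhds ht) Ioo_subset_Icc_self
    have hii : IntervalIntegrable g MeasureTheory.volume 0 t := by
      apply ContinuousOn.intervalIntegrable
      apply hgc.mono
      rw [uIcc_of_le ht.1.le]
      exact Icc_subset_Icc le_rfl ht.2.le
    have hgca : ContinuousAt g t := hgc.continuousAt hnbd
    have hI : HasDerivAt (fun u => ∫ s in (0:ℝ)..u, g s) (g t) t :=
      intervalIntegral.integral_hasDerivAt_right hii
        (ContinuousOn.stronglyMeasurableAtFilter isOpen_Ioo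
          (hgc.mono Ioo_subset_Icc_self) t ht) hgca
    have hsq : HasDerivAt (fun u => Real.sqrt (σ u))
        ((1 / (2 * Real.sqrt (σ t))) * deriv σ t) t := by
      have h1 : HasDerivAt Real.sqrt (1 / (2 * Real.sqrt (σ t))) (σ t) :=
        Real.hasDerivAt_sqrt (ne_of_gt (hσpos t htIcc))
      exact h1.comp t (hσd t htIcc).hasDerivAt
    have hexp : HasDerivAt (fun u => Real.exp (-a * u)) (Real.exp (-a * t) * (-a)) t := by
      have h1 : HasDerivAt (fun u : ℝ => -a * u) (-a) t := by
        simpa using (hasDerivAt_id t).const_mul (-a)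
      exact h1.exp
    have := ((hI.const_mul (1/ν)).const_add 1).const_mul s0
    exact this.sub (hsq.mul hexp)
  -- nonnegativity of F'
  have hF'0 : ∀ t ∈ Ioo (0:ℝ) T, 0 ≤ deriv F t := by
    intro t ht
    have htIcc : t ∈ Icc (0:ℝ) T := Ioo_subset_Icc_self ht
    rw [(hderiv t ht).deriv]
    set s : ℝ := Real.sqrt (σ t) with hs
    have hspos : 0 < s := Real.sqrt_pos.mpr (hσpos t htIcc)
    have hEpos : 0 < Real.exp (-a * t) := Real.exp_pos _
    have hss : s ^ 2 = σ t := Real.sq_sqrt (hσpos t htIcc).le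
    have hstep : (1 / (2 * s)) * deriv σ t ≤ a * s + s0 * (1 / ν) * (kd t * β t) := by
      rw [div_mul_eq_mul_div, one_mul, div_le_iff₀ (by positivity)]
      have h := hineq t htIcc
      rw [← hs, ← hss] at h
      have he : (a * s + s0 * (1 / ν) * (kd t * β t)) * (2 * s)
          = 2 * a * s ^ 2 + 2 / ν * kd t * β t * s0 * s := by
        field_simp
      rw [he]; exact h
    have key : (1 / (2 * s)) * deriv σ t * Real.exp (-a * t)
        + s * (Real.exp (-a * t) * (-a)) ≤ s0 * (1 / ν) * g t := by
      have h1 : (1 / (2 * s)) * deriv σ t * Real.exp (-a * t)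
          + s * (Real.exp (-a * t) * (-a))
          = ((1 / (2 * s)) * deriv σ t - a * s) * Real.exp (-a * t) := by ring
      have h2 : s0 * (1 / ν) * g t
          = (s0 * (1 / ν) * (kd t * β t)) * Real.exp (-a * t) := by
        simp only [hg]; ring
      rw [h1, h2]
      apply mul_le_mul_of_nonneg_right _ hEpos.le
      linarith [hstep]
    linarith [key]
  have hFdiff : DifferentiableOn ℝ F (interior (Icc (0:ℝ) T)) := by
    rw [interior_Icc]
    exact fun t ht => ((hderiv t ht).differentiableAt).differentiableWithinAt
  have hmono : MonotoneOn F (Icc 0 T) := by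
    apply monotoneOn_of_deriv_nonneg (convex_Icc 0 T) hFc hFdiff
    intro t ht
    rw [interior_Icc] at ht
    exact hF'0 t ht
  -- conclude
  intro t ht
  have hF0 : F 0 = 0 := by
    simp [hF, hs0, Real.exp_zero, intervalIntegral.integral_same]
  have hmle : F 0 ≤ F t := hmono h0T ht ht.1
  rw [hF0] at hmle
  -- unfold
  have hE : Real.sqrt (σ t) * Real.exp (-a * t)
      ≤ s0 * (1 + (1 / ν) * ∫ s in (0:ℝ)..t, g s) := by
    simp only [hF] at hmle; linarith
  set B : ℝ := 1 + (1 / ν) * ∫ s in (0:ℝ)..t, g s with hB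
  have hBnn : 0 ≤ B := by
    have hInn : 0 ≤ ∫ s in (0:ℝ)..t, g s := by
      apply intervalIntegral.integral_nonneg ht.1
      intro s hs
      have hsIcc : s ∈ Icc (0:ℝ) T := ⟨hs.1, le_trans hs.2 ht.2⟩
      exact mul_nonneg (mul_nonneg (Real.exp_pos _).le (hkd0 s hsIcc)) (hβ0 s hsIcc)
    have h2 : 0 ≤ (1 / ν) * ∫ s in (0:ℝ)..t, g s := by positivity
    rw [hB]; linarith
  have hLnn : 0 ≤ Real.sqrt (σ t) * Real.exp (-a * t) := by positivity
  have hsq : (Real.sqrt (σ t) * Real.exp (-a * t)) ^ 2 ≤ (s0 * B) ^ 2 := by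
    apply pow_le_pow_left₀ hLnn hE
  have hst : Real.sqrt (σ t) ^ 2 = σ t := Real.sq_sqrt (hσpos t ht).le
  have hs02 : s0 ^ 2 = σ 0 := Real.sq_sqrt hσ0.le
  have hEE : Real.exp (-a * t) * Real.exp (-a * t) * Real.exp (2 * a * t) = 1 := by
    rw [← Real.exp_add, ← Real.exp_add,
      show -a * t + -a * t + 2 * a * t = (0:ℝ) from by ring]
    exact Real.exp_zero
  have hexp2 : (0:ℝ) < Real.exp (2 * a * t) := Real.exp_pos _
  have h1 : σ t * (Real.exp (-a * t) * Real.exp (-a * t)) ≤ σ 0 * B ^ 2 :=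
    calc σ t * (Real.exp (-a * t) * Real.exp (-a * t))
        = (Real.sqrt (σ t) * Real.exp (-a * t)) ^ 2 := by rw [mul_pow, hst]; ring
      _ ≤ (s0 * B) ^ 2 := hsq
      _ = σ 0 * B ^ 2 := by rw [mul_pow, hs02]
  calc σ t = σ t * (Real.exp (-a * t) * Real.exp (-a * t)) * Real.exp (2 * a * t) := by
        rw [mul_assoc, mul_assoc, ← mul_assoc (Real.exp (-a * t)), hEE, mul_one]
    _ ≤ σ 0 * B ^ 2 * Real.exp (2 * a * t) := mul_le_mul_of_nonneg_right h1 hexp2.le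
    _ = σ 0 * Real.exp (2 * a * t) * B ^ 2 := by ring
end

section
/- Let T > 0, ν > 0, b ≥ 0, let k_d, β : [0,T] → ℝ be continuous and nonnegative, and let σ : [0,T] → ℝ be differentiable with σ(t) > 0 for all t ∈ [0,T] and σ'(t) ≥ −2b σ(t) − (2/ν) k_d(t) β(t) √(σ(0)) √(σ(t)) for all t ∈ [0,T]. Then for all t ∈ [0,T]: √(σ(t)) ≥ √(σ(0)) e^{−bt} (1 − (1/ν) ∫₀ᵗ e^{bs} k_d(s) β(s) ds); in particular, for every t such that (1/ν) ∫₀ᵗ e^{bs} k_d(s) β(s) ds ≤ 1, one has σ(t) ≥ σ(0) e^{−2bt} (1 − (1/ν) ∫₀ᵗ e^{bs} k_d(s) β(s) ds)². -/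
open Set

/-- Comparison estimate (lower variance bound for the open-loop
Riccati control): if `σ' ≥ −2bσ − (2/ν) k_d β √(σ(0)) √σ` on `[0,T]` with `σ > 0`,
then `√(σ(t)) ≥ √(σ(0)) e^{−bt} (1 − (1/ν)∫₀ᵗ e^{bs} k_d(s) β(s) ds)`; in particular,
whenever `(1/ν)∫₀ᵗ e^{bs} k_d(s) β(s) ds ≤ 1` one has
`σ(t) ≥ σ(0) e^{−2bt} (1 − (1/ν)∫₀ᵗ e^{bs} k_d(s) β(s) ds)²`. -/
theorem open_loop_lower_comparison (T ν b : ℝ) (hT : 0 < T) (hν : 0 < ν) (hb : 0 ≤ b)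
    (kd β : ℝ → ℝ)
    (hkdc : ContinuousOn kd (Icc 0 T)) (hkd0 : ∀ t ∈ Icc (0:ℝ) T, 0 ≤ kd t)
    (hβc : ContinuousOn β (Icc 0 T)) (hβ0 : ∀ t ∈ Icc (0:ℝ) T, 0 ≤ β t)
    (σ : ℝ → ℝ)
    (hσd : ∀ t ∈ Icc (0:ℝ) T, DifferentiableAt ℝ σ t)
    (hσpos : ∀ t ∈ Icc (0:ℝ) T, 0 < σ t)
    (hineq : ∀ t ∈ Icc (0:ℝ) T,
        -2 * b * σ t - (2 / ν) * kd t * β t * Real.sqrt (σ 0) * Real.sqrt (σ t)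
          ≤ deriv σ t) :
    ∀ t ∈ Icc (0:ℝ) T,
      (Real.sqrt (σ 0) * Real.exp (-b * t)
          * (1 - (1 / ν) * ∫ s in (0:ℝ)..t, Real.exp (b * s) * kd s * β s)
        ≤ Real.sqrt (σ t))
      ∧ ((1 / ν) * (∫ s in (0:ℝ)..t, Real.exp (b * s) * kd s * β s) ≤ 1 →
        σ 0 * Real.exp (-2 * b * t)
            * (1 - (1 / ν) * ∫ s in (0:ℝ)..t, Real.exp (b * s) * kd s * β s) ^ 2
          ≤ σ t) := by
  set h : ℝ → ℝ := fun s => Real.exp (b * s) * kd s * β s with hh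
  have hhc : ContinuousOn h (Icc 0 T) :=
    (((Real.continuous_exp.comp (continuous_const.mul continuous_id)).continuousOn).mul
      hkdc).mul hβc
  set c : ℝ := Real.sqrt (σ 0) / ν with hc
  have hc0 : 0 ≤ c := div_nonneg (Real.sqrt_nonneg _) hν.le
  set G : ℝ → ℝ := fun t => Real.exp (b * t) * Real.sqrt (σ t)
      + c * ∫ s in (0:ℝ)..t, h s with hG
  have hσc : ContinuousOn σ (Icc 0 T) := fun t ht =>
    ((hσd t ht).continuousAt).continuousWithinAt
  have hint : IntervalIntegrable h MeasureTheory.volume 0 T := by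
    apply ContinuousOn.intervalIntegrable
    rwa [uIcc_of_le hT.le]
  have hGc : ContinuousOn G (Icc 0 T) := by
    apply ContinuousOn.add
    · exact ((Real.continuous_exp.comp (continuous_const.mul continuous_id)).continuousOn).mul
        (Real.continuous_sqrt.comp_continuousOn hσc)
    · apply continuousOn_const.mul
      have := intervalIntegral.continuousOn_primitive_interval
        (f := h) (μ := MeasureTheory.volume) (a := (0:ℝ)) (b := T) ?_
      · rwa [uIcc_of_le hT.le] at this
      · rw [uIcc_of_le hT.le]
        exact hhc.integrableOn_compact isCompact_Icc
  have hGd : ∀ t ∈ Ioo (0:ℝ) T, HasDerivAt G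
      (b * Real.exp (b * t) * Real.sqrt (σ t)
        + Real.exp (b * t) * (deriv σ t / (2 * Real.sqrt (σ t))) + c * h t) t := by
    intro t ht
    have ht' : t ∈ Icc (0:ℝ) T := Ioo_subset_Icc_self ht
    have hσt := hσpos t ht'
    have h1 : HasDerivAt (fun t => Real.exp (b * t)) (b * Real.exp (b * t)) t := by
      simpa [mul_comm, Function.comp_def] using (Real.hasDerivAt_exp (b * t)).comp t
        ((hasDerivAt_id t).const_mul b)
    have h2 : HasDerivAt (fun t => Real.sqrt (σ t))
        (deriv σ t / (2 * Real.sqrt (σ t))) t :=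
      ((hσd t ht').hasDerivAt).sqrt hσt.ne'
    have h3 : HasDerivAt (fun t => ∫ s in (0:ℝ)..t, h s) (h t) t := by
      apply intervalIntegral.integral_hasDerivAt_right
      · apply hint.mono_set
        rw [uIcc_of_le ht.1.le, uIcc_of_le hT.le]
        exact Icc_subset_Icc le_rfl ht.2.le
      · exact ⟨Ioo 0 T, Ioo_mem_nhds ht.1 ht.2,
          (hhc.mono Ioo_subset_Icc_self).aestronglyMeasurable measurableSet_Ioo⟩
      · exact (hhc t ht').continuousAt (Icc_mem_nhds ht.1 ht.2)
    exact (h1.mul h2).add (h3.const_mul c)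
  have hmono : MonotoneOn G (Icc 0 T) := by
    apply monotoneOn_of_deriv_nonneg (convex_Icc 0 T) hGc
    · intro t ht
      rw [interior_Icc] at ht
      exact (hGd t ht).differentiableAt.differentiableWithinAt
    · intro t ht
      rw [interior_Icc] at ht
      have ht' : t ∈ Icc (0:ℝ) T := Ioo_subset_Icc_self ht
      have hσt := hσpos t ht'
      rw [(hGd t ht).deriv]
      have hS : 0 < Real.sqrt (σ t) := Real.sqrt_pos.mpr hσt
      have hSS : Real.sqrt (σ t) ^ 2 = σ t := Real.sq_sqrt hσt.le
      have hE : 0 < Real.exp (b * t) := Real.exp_pos _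
      have hd := hineq t ht'
      have hK : 0 ≤ kd t * β t := mul_nonneg (hkd0 t ht') (hβ0 t ht')
      have hS0 : 0 ≤ Real.sqrt (σ 0) := Real.sqrt_nonneg _
      have h2S : 0 < 2 * Real.sqrt (σ t) := by positivity
      have expand : b * Real.exp (b * t) * Real.sqrt (σ t)
          + Real.exp (b * t) * (deriv σ t / (2 * Real.sqrt (σ t))) + c * h t
          = (2 * b * Real.exp (b * t) * Real.sqrt (σ t) ^ 2
            + Real.exp (b * t) * deriv σ t
            + 2 * Real.sqrt (σ t) * (c * h t)) / (2 * Real.sqrt (σ t)) := by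
        field_simp
      rw [expand]
      apply div_nonneg _ h2S.le
      have hchc : c * h t = Real.sqrt (σ 0) / ν * (Real.exp (b * t) * kd t * β t) := rfl
      rw [hSS, hchc]
      have hkey : 2 * b * Real.exp (b * t) * σ t + Real.exp (b * t) * deriv σ t
          + 2 * Real.sqrt (σ t) * (Real.sqrt (σ 0) / ν * (Real.exp (b * t) * kd t * β t))
          = Real.exp (b * t) * (deriv σ t
            - (-2 * b * σ t - (2 / ν) * kd t * β t * Real.sqrt (σ 0) * Real.sqrt (σ t))) := by
        field_simp
        ring
      rw [hkey]
      exact mul_nonneg hE.le (by linarith)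
  intro t ht
  have hG0 : G 0 ≤ G t := hmono (left_mem_Icc.mpr hT.le) ht (ht.1)
  have hG0v : G 0 = Real.sqrt (σ 0) := by
    simp [hG]
  set I : ℝ := ∫ s in (0:ℝ)..t, Real.exp (b * s) * kd s * β s with hI
  have hGI : G t = Real.exp (b * t) * Real.sqrt (σ t) + c * I := rfl
  have hE : 0 < Real.exp (b * t) := Real.exp_pos _
  have hEneg : Real.exp (-b * t) = (Real.exp (b * t))⁻¹ := by
    rw [← Real.exp_neg]; ring_nf
  have key : Real.sqrt (σ 0) * Real.exp (-b * t) * (1 - (1 / ν) * I)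
      ≤ Real.sqrt (σ t) := by
    rw [hEneg]
    rw [hG0v, hGI] at hG0
    have : Real.sqrt (σ 0) - c * I ≤ Real.exp (b * t) * Real.sqrt (σ t) := by linarith
    have h2 : Real.sqrt (σ 0) * (1 - (1 / ν) * I) = Real.sqrt (σ 0) - c * I := by
      rw [hc]; ring
    rw [mul_comm (Real.sqrt (σ 0)) (Real.exp (b * t))⁻¹, mul_assoc, h2,
      inv_mul_le_iff₀ hE]
    linarith
  refine ⟨key, fun hA => ?_⟩
  have hL0 : 0 ≤ Real.sqrt (σ 0) * Real.exp (-b * t) * (1 - (1 / ν) * I) := by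
    have : 0 ≤ 1 - (1 / ν) * I := by linarith
    positivity
  have hsq : (Real.sqrt (σ 0) * Real.exp (-b * t) * (1 - (1 / ν) * I)) ^ 2
      ≤ Real.sqrt (σ t) ^ 2 := pow_le_pow_left₀ hL0 key 2
  have hexp2 : Real.exp (-b * t) ^ 2 = Real.exp (-2 * b * t) := by
    rw [← Real.exp_nat_mul]; ring_nf
  have hσ0 : 0 < σ 0 := hσpos 0 (left_mem_Icc.mpr hT.le)
  have hσt : 0 < σ t := hσpos t ht
  calc σ 0 * Real.exp (-2 * b * t) * (1 - (1 / ν) * I) ^ 2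
      = (Real.sqrt (σ 0) * Real.exp (-b * t) * (1 - (1 / ν) * I)) ^ 2 := by
        rw [mul_pow, mul_pow, Real.sq_sqrt hσ0.le, hexp2]
    _ ≤ Real.sqrt (σ t) ^ 2 := hsq
    _ = σ t := Real.sq_sqrt hσt.le
end

section
/- Assume P : ℝ^d × ℝ^d → ℝ is continuous, symmetric (P(v,w) = P(w,v) for all v,w), and bounded with −a ≤ P(v,w) ≤ b for all v,w, where a, b ≥ 0. Let k_d, k_o solve the scaled Riccati system and let differentiable functions v_1,…,v_N : [0,T] → ℝ^d solve the closed-loop system. Then the empirical variance σ²(t) = (1/N) Σ_{j=1}^N |v_j(t) − m(t)|², with m(t) = (1/N) Σ_{j=1}^N v_j(t), satisfies for all t ∈ [0,T]: σ²(0) e^{−2bt} C_N(t) ≤ σ²(t) ≤ σ²(0) e^{2at} C_N(t), where C_N(t) = exp(−(2/ν) ∫₀ᵗ (k_d(s) − k_o(s)/N) ds). -/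
open Set


open Set Finset MeasureTheory

lemma alg_bounds {E : Type*} [NormedAddCommGroup E] [InnerProductSpace ℝ E]
    (N : ℕ) (hN : 0 < N) (a b c : ℝ) (p : Fin N → Fin N → ℝ)
    (hsym : ∀ j k, p j k = p k j) (hbd : ∀ j k, -a ≤ p j k ∧ p j k ≤ b)
    (u : Fin N → E) (r : E) (V : Fin N → E)
    (hV : ∀ j, V j = (N:ℝ)⁻¹ • ∑ k, p j k • (u k - u j) + c • u j + r)
    (μ : E) (hμ : μ = (N:ℝ)⁻¹ • ∑ k, u k)
    (M : E) (hM : M = (N:ℝ)⁻¹ • ∑ j, V j)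
    (σ : ℝ) (hσ : σ = (N:ℝ)⁻¹ * ∑ j, ‖u j - μ‖^2) :
    (2*c - 2*b) * σ ≤ (N:ℝ)⁻¹ * ∑ j, ((inner ℝ (u j - μ) (V j - M) : ℝ) + (inner ℝ (V j - M) (u j - μ) : ℝ))
    ∧ (N:ℝ)⁻¹ * ∑ j, ((inner ℝ (u j - μ) (V j - M) : ℝ) + (inner ℝ (V j - M) (u j - μ) : ℝ)) ≤ (2*c + 2*a) * σ := by
  have hNR : (0:ℝ) < N := Nat.cast_pos.mpr hN
  have hNne : (N:ℝ) ≠ 0 := ne_of_gt hNR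
  obtain ⟨w, hw⟩ : ∃ w : Fin N → E, ∀ j, w j = u j - μ := ⟨_, fun _ => rfl⟩
  obtain ⟨A, hA⟩ : ∃ A : Fin N → E, ∀ j, A j = (N:ℝ)⁻¹ • ∑ k, p j k • (u k - u j) :=
    ⟨_, fun _ => rfl⟩
  have hsumw : ∑ j, w j = 0 := by
    simp only [hw, Finset.sum_sub_distrib, Finset.sum_const, Finset.card_univ, Fintype.card_fin,
      hμ, ← Nat.cast_smul_eq_nsmul ℝ, smul_smul, mul_inv_cancel₀ hNne, one_smul, sub_self]
  have hVA : ∀ j, V j = A j + c • u j + r := fun j => by rw [hA, hV]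
  have hsumV : ∑ j, V j = (∑ j, A j) + c • ∑ j, u j + (N:ℝ) • r := by
    rw [Finset.sum_congr rfl (fun j _ => hVA j), Finset.sum_add_distrib,
      Finset.sum_add_distrib, ← Finset.smul_sum, Finset.sum_const, Finset.card_univ,
      Fintype.card_fin, Nat.cast_smul_eq_nsmul]
  have hMval : M = (N:ℝ)⁻¹ • ∑ j, A j + c • μ + r := by
    rw [hM, hsumV, smul_add, smul_add]
    congr 1
    · congr 1
      rw [hμ, smul_comm]
    · rw [smul_smul, inv_mul_cancel₀ hNne, one_smul]
  have hVM : ∀ j, V j - M = (A j - (N:ℝ)⁻¹ • ∑ k, A k) + c • w j := by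
    intro j
    rw [hVA j, hMval, hw j, smul_sub]
    abel
  have hterm : ∀ j, (inner ℝ (V j - M) (w j) : ℝ)
      = (N:ℝ)⁻¹ * (∑ k, p j k * (inner ℝ (u k - u j) (w j) : ℝ))
        - (N:ℝ)⁻¹ * (inner ℝ (∑ k, A k) (w j) : ℝ) + c * ‖w j‖^2 := by
    intro j
    rw [hVM j, inner_add_left, inner_sub_left, hA j, real_inner_smul_left, real_inner_smul_left,
      real_inner_smul_left, sum_inner, real_inner_self_eq_norm_sq]
    simp only [real_inner_smul_left]
  have hsum1 : ∑ j, (inner ℝ (V j - M) (w j) : ℝ)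
      = (N:ℝ)⁻¹ * (∑ j, ∑ k, p j k * (inner ℝ (u k - u j) (w j) : ℝ)) + c * ∑ j, ‖w j‖^2 := by
    rw [Finset.sum_congr rfl (fun j _ => hterm j)]
    rw [Finset.sum_add_distrib, Finset.sum_sub_distrib, ← Finset.mul_sum, ← Finset.mul_sum,
      ← Finset.mul_sum, ← inner_sum, hsumw, inner_zero_right, mul_zero, sub_zero]
  obtain ⟨S, hS⟩ : ∃ S : ℝ, S = ∑ j, ‖w j‖^2 := ⟨_, rfl⟩
  obtain ⟨Q, hQ⟩ : ∃ Q : ℝ, Q = ∑ j, ∑ k, p j k * (inner ℝ (u k - u j) (w j) : ℝ) := ⟨_, rfl⟩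
  obtain ⟨R, hR⟩ : ∃ R : ℝ, R = ∑ j, ∑ k, ‖u k - u j‖^2 := ⟨_, rfl⟩
  have hQswap : Q = ∑ j, ∑ k, p j k * (inner ℝ (u j - u k) (w k) : ℝ) := by
    rw [hQ, Finset.sum_comm]
    exact Finset.sum_congr rfl fun x _ => Finset.sum_congr rfl fun y _ => by rw [hsym]
  have hkey : ∀ j k : Fin N, (inner ℝ (u k - u j) (w j) : ℝ) + (inner ℝ (u j - u k) (w k) : ℝ)
      = -(‖u k - u j‖^2) := by
    intro j k
    rw [hw j, hw k, show u j - u k = -(u k - u j) from (neg_sub _ _).symm, inner_neg_left,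
      ← sub_eq_add_neg, ← inner_sub_right,
      show u j - μ - (u k - μ) = -(u k - u j) from by abel, inner_neg_right,
      real_inner_self_eq_norm_sq]
  have h2Q : 2 * Q = ∑ j, ∑ k, p j k * (-(‖u k - u j‖^2)) := by
    have h : 2 * Q = Q + Q := by ring
    rw [h]
    nth_rewrite 2 [hQswap]
    rw [hQ, ← Finset.sum_add_distrib]
    refine Finset.sum_congr rfl fun j _ => ?_
    rw [← Finset.sum_add_distrib]
    refine Finset.sum_congr rfl fun k _ => ?_
    rw [← mul_add, hkey]
  have hRS : R = 2 * N * S := by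
    rw [hR, hS]
    have e : ∀ j k : Fin N, ‖u k - u j‖^2 = ‖w k‖^2 - 2 * (inner ℝ (w k) (w j) : ℝ) + ‖w j‖^2 := by
      intro j k
      rw [show u k - u j = w k - w j from by rw [hw, hw]; abel, norm_sub_sq_real]
    rw [Finset.sum_congr rfl fun j _ => Finset.sum_congr rfl fun k _ => e j k]
    have hzero : ∑ j : Fin N, ∑ k : Fin N, (inner ℝ (w k) (w j) : ℝ) = 0 := by
      refine Finset.sum_eq_zero fun j _ => ?_
      rw [← sum_inner, hsumw, inner_zero_left]
    simp only [Finset.sum_add_distrib, Finset.sum_sub_distrib, ← Finset.mul_sum, hzero,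
      mul_zero, sub_zero, Finset.sum_const, Finset.card_univ, Fintype.card_fin, nsmul_eq_mul]
    ring
  have hZub : ∑ j, ∑ k, p j k * (-(‖u k - u j‖^2)) ≤ a * R := by
    rw [hR, Finset.mul_sum]
    refine Finset.sum_le_sum fun j _ => ?_
    rw [Finset.mul_sum]
    refine Finset.sum_le_sum fun k _ => ?_
    have h1 := (hbd j k).1
    nlinarith [sq_nonneg ‖u k - u j‖]
  have hZlb : -(b * R) ≤ ∑ j, ∑ k, p j k * (-(‖u k - u j‖^2)) := by
    rw [hR, Finset.mul_sum, ← Finset.sum_neg_distrib]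
    refine Finset.sum_le_sum fun j _ => ?_
    rw [Finset.mul_sum, ← Finset.sum_neg_distrib]
    refine Finset.sum_le_sum fun k _ => ?_
    have h1 := (hbd j k).2
    nlinarith [sq_nonneg ‖u k - u j‖]
  have hσS : σ = (N:ℝ)⁻¹ * S := by
    rw [hσ, hS]
    congr 1
    exact Finset.sum_congr rfl fun j _ => by rw [hw]
  have htot : (N:ℝ)⁻¹ * ∑ j, ((inner ℝ (u j - μ) (V j - M) : ℝ) + (inner ℝ (V j - M) (u j - μ) : ℝ))
      = 2 * ((N:ℝ)⁻¹ * (N:ℝ)⁻¹ * Q + c * ((N:ℝ)⁻¹ * S)) := by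
    have e1 : ∑ j, ((inner ℝ (u j - μ) (V j - M) : ℝ) + (inner ℝ (V j - M) (u j - μ) : ℝ))
        = 2 * ∑ j, (inner ℝ (V j - M) (w j) : ℝ) := by
      rw [Finset.mul_sum]
      refine Finset.sum_congr rfl fun j _ => ?_
      rw [← hw j, real_inner_comm]
      ring
    rw [e1, hsum1, ← hQ, ← hS]
    ring
  have hNN : (0:ℝ) ≤ (N:ℝ)⁻¹ * (N:ℝ)⁻¹ := by positivity
  constructor
  · rw [htot, hσS]
    have h4 := mul_le_mul_of_nonneg_left hZlb hNN
    rw [← h2Q] at h4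
    have h5 : (N:ℝ)⁻¹ * (N:ℝ)⁻¹ * (-(b * R)) = -(2*b*((N:ℝ)⁻¹*S)) := by
      rw [hRS]
      field_simp
    have h6 : (N:ℝ)⁻¹ * (N:ℝ)⁻¹ * (2*Q) = 2*((N:ℝ)⁻¹ * (N:ℝ)⁻¹ * Q) := by ring
    rw [h5, h6] at h4
    linarith
  · rw [htot, hσS]
    have h4 := mul_le_mul_of_nonneg_left hZub hNN
    rw [← h2Q] at h4
    have h5 : (N:ℝ)⁻¹ * (N:ℝ)⁻¹ * (a * R) = 2*a*((N:ℝ)⁻¹*S) := by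
      rw [hRS]
      field_simp
    have h6 : (N:ℝ)⁻¹ * (N:ℝ)⁻¹ * (2*Q) = 2*((N:ℝ)⁻¹ * (N:ℝ)⁻¹ * Q) := by ring
    rw [h5, h6] at h4
    linarith


/-- For the closed-loop system with symmetric interaction kernel
bounded by `−a ≤ P ≤ b`, the empirical variance satisfies
`σ²(0) e^{−2bt} C_N(t) ≤ σ²(t) ≤ σ²(0) e^{2at} C_N(t)` with
`C_N(t) = exp(−(2/ν)∫₀ᵗ (k_d − k_o/N))`. -/
theorem closed_loop_variance_bounds (N d : ℕ) (hN : 1 ≤ N) (hd : 1 ≤ d)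
    (T ν p a b : ℝ) (hT : 0 < T) (hν : 0 < ν) (ha : 0 ≤ a) (hb : 0 ≤ b)
    (P : EuclideanSpace ℝ (Fin d) → EuclideanSpace ℝ (Fin d) → ℝ)
    (hPcont : Continuous fun q : EuclideanSpace ℝ (Fin d) × EuclideanSpace ℝ (Fin d) =>
      P q.1 q.2)
    (hPsymm : ∀ v w, P v w = P w v)
    (hPbound : ∀ v w, -a ≤ P v w ∧ P v w ≤ b)
    (kd ko : ℝ → ℝ)
    (hkd : ∀ t ∈ Icc (0:ℝ) T, HasDerivAt kd
        (-(-2 * p * (((N : ℝ) - 1) / N) * (kd t - ko t / N)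
            - (1 / ν) * ((kd t) ^ 2 + ((((N : ℝ) - 1) / N) / N) * (ko t) ^ 2) + 1)) t)
    (hkdT : kd T = 0)
    (hko : ∀ t ∈ Icc (0:ℝ) T, HasDerivAt ko
        (-(2 * p * (kd t - ko t / N)
            - (1 / ν) * (2 * kd t * ko t + (((N : ℝ) - 1) / N) * (ko t) ^ 2
                - (ko t) ^ 2 / N))) t)
    (hkoT : ko T = 0)
    (v : Fin N → ℝ → EuclideanSpace ℝ (Fin d))
    (hv : ∀ t ∈ Icc (0:ℝ) T, ∀ i : Fin N,
        HasDerivAt (v i)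
          ((N : ℝ)⁻¹ • ∑ j, P (v i t) (v j t) • (v j t - v i t)
            + (-(1 / ν)) • ((kd t - ko t / N) • v i t + (ko t / N) • ∑ j, v j t)) t)
    (m : ℝ → EuclideanSpace ℝ (Fin d))
    (hm : ∀ t, m t = (N : ℝ)⁻¹ • ∑ j, v j t)
    (σ2 : ℝ → ℝ) (hσ2 : ∀ t, σ2 t = (N : ℝ)⁻¹ * ∑ j, ‖v j t - m t‖ ^ 2) :
    ∀ t ∈ Icc (0:ℝ) T,
      σ2 0 * Real.exp (-2 * b * t)
          * Real.exp (-(2 / ν) * ∫ s in (0:ℝ)..t, (kd s - ko s / N))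
          ≤ σ2 t
        ∧ σ2 t ≤ σ2 0 * Real.exp (2 * a * t)
          * Real.exp (-(2 / ν) * ∫ s in (0:ℝ)..t, (kd s - ko s / N)) := by
  have hNpos : 0 < N := hN
  have hNR : (0:ℝ) < N := Nat.cast_pos.mpr hNpos
  obtain ⟨V, hV⟩ : ∃ V : Fin N → ℝ → EuclideanSpace ℝ (Fin d), ∀ i t, V i t =
      (N : ℝ)⁻¹ • ∑ j, P (v i t) (v j t) • (v j t - v i t)
        + (-(1 / ν)) • ((kd t - ko t / N) • v i t + (ko t / N) • ∑ j, v j t) :=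
    ⟨_, fun _ _ => rfl⟩
  have hvV : ∀ t ∈ Icc (0:ℝ) T, ∀ i, HasDerivAt (v i) (V i t) t := by
    intro t ht i
    rw [hV]
    exact hv t ht i
  obtain ⟨M, hM⟩ : ∃ M : ℝ → EuclideanSpace ℝ (Fin d), ∀ t, M t = (N:ℝ)⁻¹ • ∑ j, V j t :=
    ⟨_, fun _ => rfl⟩
  have hm' : m = fun t => (N:ℝ)⁻¹ • ∑ j, v j t := funext hm
  have hmd : ∀ t ∈ Icc (0:ℝ) T, HasDerivAt m (M t) t := by
    intro t ht
    rw [hm', hM]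
    exact (HasDerivAt.fun_sum (fun j _ => hvV t ht j)).const_smul (N:ℝ)⁻¹
  have hwd : ∀ t ∈ Icc (0:ℝ) T, ∀ j, HasDerivAt (fun s => v j s - m s) (V j t - M t) t :=
    fun t ht j => (hvV t ht j).sub (hmd t ht)
  obtain ⟨D, hD⟩ : ∃ D : ℝ → ℝ, ∀ t, D t = (N:ℝ)⁻¹ * ∑ j,
      ((inner ℝ (v j t - m t) (V j t - M t) : ℝ) + (inner ℝ (V j t - M t) (v j t - m t) : ℝ)) :=
    ⟨_, fun _ => rfl⟩
  have hσ2' : σ2 = fun t => (N:ℝ)⁻¹ * ∑ j, ‖v j t - m t‖^2 := funext hσ2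
  have hσd : ∀ t ∈ Icc (0:ℝ) T, HasDerivAt σ2 (D t) t := by
    intro t ht
    rw [hσ2', hD]
    have h1 : ∀ j : Fin N, HasDerivAt (fun s => ‖v j s - m s‖^2)
        ((inner ℝ (v j t - m t) (V j t - M t) : ℝ) + (inner ℝ (V j t - M t) (v j t - m t) : ℝ)) t := by
      intro j
      have h2 := HasDerivAt.inner ℝ (hwd t ht j) (hwd t ht j)
      exact h2.congr_of_eventuallyEq
        (Filter.Eventually.of_forall fun s => (real_inner_self_eq_norm_sq _).symm)
    exact (HasDerivAt.fun_sum (fun j _ => h1 j)).const_mul _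
  have hbounds : ∀ t ∈ Icc (0:ℝ) T,
      (2*(-(1/ν)*(kd t - ko t / N)) - 2*b) * σ2 t ≤ D t
      ∧ D t ≤ (2*(-(1/ν)*(kd t - ko t / N)) + 2*a) * σ2 t := by
    intro t ht
    have hVt : ∀ j : Fin N, V j t = (N:ℝ)⁻¹ • ∑ k, P (v j t) (v k t) • (v k t - v j t)
        + (-(1/ν)*(kd t - ko t / N)) • v j t + ((-(1/ν)*(ko t / N)) • ∑ k, v k t) := by
      intro j
      rw [hV, smul_add, smul_smul, smul_smul, ← add_assoc]
    have halg := alg_bounds N hNpos a b (-(1/ν)*(kd t - ko t / N)) (fun j k => P (v j t) (v k t))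
      (fun j k => hPsymm _ _) (fun j k => hPbound _ _) (fun j => v j t)
      ((-(1/ν)*(ko t / N)) • ∑ k, v k t) (fun j => V j t) hVt (m t) (hm t) (M t) (hM t)
      (σ2 t) (hσ2 t)
    rw [hD]
    exact halg
  -- integral of kd - ko/N
  have hκca : ∀ t ∈ Icc (0:ℝ) T, ContinuousAt (fun s => kd s - ko s / (N:ℝ)) t :=
    fun t ht => (hkd t ht).continuousAt.sub ((hko t ht).continuousAt.div_const _)
  have hκcOn : ContinuousOn (fun s => kd s - ko s / (N:ℝ)) (Icc 0 T) :=
    fun t ht => (hκca t ht).continuousWithinAt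
  have hκint : ∀ t ∈ Icc (0:ℝ) T,
      IntervalIntegrable (fun s => kd s - ko s / (N:ℝ)) volume 0 t := by
    intro t ht
    apply ContinuousOn.intervalIntegrable
    intro s hs
    rw [uIcc_of_le ht.1] at hs
    exact (hκca s ⟨hs.1, le_trans hs.2 ht.2⟩).continuousWithinAt
  obtain ⟨I, hI⟩ : ∃ I : ℝ → ℝ, ∀ x, I x = ∫ s in (0:ℝ)..x, (kd s - ko s / (N:ℝ)) :=
    ⟨_, fun _ => rfl⟩
  have hIfun : I = fun x => ∫ s in (0:ℝ)..x, (kd s - ko s / (N:ℝ)) := funext hI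
  have hIcont : ContinuousOn I (Icc 0 T) := by
    rw [hIfun]
    have h := intervalIntegral.continuousOn_primitive_interval
      (f := fun s => kd s - ko s / (N:ℝ)) (μ := volume) (a := 0) (b := T) ?_
    · rwa [uIcc_of_le hT.le] at h
    · rw [uIcc_of_le hT.le]
      exact hκcOn.integrableOn_compact isCompact_Icc
  have hId : ∀ t ∈ Ioo (0:ℝ) T, HasDerivAt I (kd t - ko t / (N:ℝ)) t := by
    intro t ht
    have h := intervalIntegral.integral_hasDerivAt_right (hκint t ⟨ht.1.le, ht.2.le⟩)
      ⟨Ioo 0 T, Ioo_mem_nhds ht.1 ht.2,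
        ((hκcOn.mono Ioo_subset_Icc_self).aestronglyMeasurable measurableSet_Ioo)⟩
      (hκca t ⟨ht.1.le, ht.2.le⟩)
    rw [hIfun]
    exact h
  have hσc : ContinuousOn σ2 (Icc 0 T) :=
    fun t ht => (hσd t ht).continuousAt.continuousWithinAt
  -- the monotone function F
  obtain ⟨F, hF⟩ : ∃ F : ℝ → ℝ, ∀ t, F t = σ2 t * Real.exp (2*b*t + (2/ν) * I t) :=
    ⟨_, fun _ => rfl⟩
  have hFfun : F = fun t => σ2 t * Real.exp (2*b*t + (2/ν) * I t) := funext hF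
  have hFd : ∀ x ∈ Ioo (0:ℝ) T, HasDerivAt F
      (D x * Real.exp (2*b*x + (2/ν) * I x)
        + σ2 x * (Real.exp (2*b*x + (2/ν) * I x) * (2*b + (2/ν) * (kd x - ko x / N)))) x := by
    intro x hx
    have hxI : x ∈ Icc (0:ℝ) T := ⟨hx.1.le, hx.2.le⟩
    have hin : HasDerivAt (fun t => 2*b*t + (2/ν) * I t)
        (2*b + (2/ν) * (kd x - ko x / N)) x := by
      have h1 : HasDerivAt (fun t : ℝ => 2*b*t) (2*b) x := by
        simpa using (hasDerivAt_id x).const_mul (2*b)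
      exact h1.add ((hId x hx).const_mul (2/ν))
    rw [hFfun]
    exact (hσd x hxI).mul hin.exp
  have hFmono : MonotoneOn F (Icc 0 T) := by
    apply monotoneOn_of_deriv_nonneg (convex_Icc 0 T)
    · rw [hFfun]
      exact hσc.mul (Real.continuous_exp.comp_continuousOn
        (((continuous_const.mul continuous_id).continuousOn).add
          (continuousOn_const.mul hIcont)))
    · rw [interior_Icc]
      exact fun x hx => (hFd x hx).differentiableAt.differentiableWithinAt
    · rw [interior_Icc]
      intro x hx
      rw [(hFd x hx).deriv]
      have hxI : x ∈ Icc (0:ℝ) T := ⟨hx.1.le, hx.2.le⟩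
      have h1 := (hbounds x hxI).1
      have h2 := mul_le_mul_of_nonneg_right h1 (Real.exp_pos (2*b*x + (2/ν) * I x)).le
      have h3 : (2*(-(1/ν)*(kd x - ko x / N)) - 2*b) * σ2 x * Real.exp (2*b*x + (2/ν) * I x)
          + σ2 x * (Real.exp (2*b*x + (2/ν) * I x) * (2*b + (2/ν) * (kd x - ko x / N))) = 0 := by
        ring
      linarith
  -- the antitone function G
  obtain ⟨G, hG⟩ : ∃ G : ℝ → ℝ, ∀ t, G t = σ2 t * Real.exp ((-(2*a))*t + (2/ν) * I t) :=
    ⟨_, fun _ => rfl⟩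
  have hGfun : G = fun t => σ2 t * Real.exp ((-(2*a))*t + (2/ν) * I t) := funext hG
  have hGd : ∀ x ∈ Ioo (0:ℝ) T, HasDerivAt G
      (D x * Real.exp ((-(2*a))*x + (2/ν) * I x)
        + σ2 x * (Real.exp ((-(2*a))*x + (2/ν) * I x)
            * ((-(2*a)) + (2/ν) * (kd x - ko x / N)))) x := by
    intro x hx
    have hxI : x ∈ Icc (0:ℝ) T := ⟨hx.1.le, hx.2.le⟩
    have hin : HasDerivAt (fun t => (-(2*a))*t + (2/ν) * I t)
        ((-(2*a)) + (2/ν) * (kd x - ko x / N)) x := by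
      have h1 : HasDerivAt (fun t : ℝ => (-(2*a))*t) (-(2*a)) x := by
        simpa using (hasDerivAt_id x).const_mul (-(2*a))
      exact h1.add ((hId x hx).const_mul (2/ν))
    rw [hGfun]
    exact (hσd x hxI).mul hin.exp
  have hGanti : AntitoneOn G (Icc 0 T) := by
    apply antitoneOn_of_deriv_nonpos (convex_Icc 0 T)
    · rw [hGfun]
      exact hσc.mul (Real.continuous_exp.comp_continuousOn
        (((continuous_const.mul continuous_id).continuousOn).add
          (continuousOn_const.mul hIcont)))
    · rw [interior_Icc]
      exact fun x hx => (hGd x hx).differentiableAt.differentiableWithinAt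
    · rw [interior_Icc]
      intro x hx
      rw [(hGd x hx).deriv]
      have hxI : x ∈ Icc (0:ℝ) T := ⟨hx.1.le, hx.2.le⟩
      have h1 := (hbounds x hxI).2
      have h2 := mul_le_mul_of_nonneg_right h1 (Real.exp_pos ((-(2*a))*x + (2/ν) * I x)).le
      have h3 : (2*(-(1/ν)*(kd x - ko x / N)) + 2*a) * σ2 x
            * Real.exp ((-(2*a))*x + (2/ν) * I x)
          + σ2 x * (Real.exp ((-(2*a))*x + (2/ν) * I x)
              * ((-(2*a)) + (2/ν) * (kd x - ko x / N))) = 0 := by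
        ring
      linarith
  -- conclusion
  intro t ht
  have h0T : (0:ℝ) ∈ Icc (0:ℝ) T := ⟨le_refl 0, hT.le⟩
  have hI0 : I 0 = 0 := by rw [hI, intervalIntegral.integral_same]
  have hF0 : F 0 = σ2 0 := by rw [hF, hI0]; norm_num
  have hG0 : G 0 = σ2 0 := by rw [hG, hI0]; norm_num
  constructor
  · have h1 := hFmono h0T ht ht.1
    rw [hF0, hF t] at h1
    rw [← hI t]
    have h2 := mul_le_mul_of_nonneg_right h1
      (mul_pos (Real.exp_pos (-2*b*t)) (Real.exp_pos (-(2/ν) * I t))).le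
    have e2 : Real.exp (2*b*t + (2/ν) * I t)
        * (Real.exp (-2*b*t) * Real.exp (-(2/ν) * I t)) = 1 := by
      rw [← Real.exp_add, ← Real.exp_add, ← Real.exp_zero]
      congr 1
      ring
    calc σ2 0 * Real.exp (-2 * b * t) * Real.exp (-(2 / ν) * I t)
        = σ2 0 * (Real.exp (-2*b*t) * Real.exp (-(2/ν) * I t)) := by ring
      _ ≤ σ2 t * Real.exp (2*b*t + (2/ν) * I t)
            * (Real.exp (-2*b*t) * Real.exp (-(2/ν) * I t)) := h2
      _ = σ2 t * (Real.exp (2*b*t + (2/ν) * I t)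
            * (Real.exp (-2*b*t) * Real.exp (-(2/ν) * I t))) := by ring
      _ = σ2 t := by rw [e2, mul_one]
  · have h1 := hGanti h0T ht ht.1
    rw [hG0, hG t] at h1
    rw [← hI t]
    have h2 := mul_le_mul_of_nonneg_right h1
      (mul_pos (Real.exp_pos (2*a*t)) (Real.exp_pos (-(2/ν) * I t))).le
    have e2 : Real.exp ((-(2*a))*t + (2/ν) * I t)
        * (Real.exp (2*a*t) * Real.exp (-(2/ν) * I t)) = 1 := by
      rw [← Real.exp_add, ← Real.exp_add, ← Real.exp_zero]
      congr 1
      ring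
    calc σ2 t
        = σ2 t * (Real.exp ((-(2*a))*t + (2/ν) * I t)
            * (Real.exp (2*a*t) * Real.exp (-(2/ν) * I t))) := by rw [e2, mul_one]
      _ = σ2 t * Real.exp ((-(2*a))*t + (2/ν) * I t)
            * (Real.exp (2*a*t) * Real.exp (-(2/ν) * I t)) := by ring
      _ ≤ σ2 0 * (Real.exp (2*a*t) * Real.exp (-(2/ν) * I t)) := h2
      _ = σ2 0 * Real.exp (2 * a * t) * Real.exp (-(2 / ν) * I t) := by ring
end

section
/- Assume P : ℝ^d × ℝ^d → ℝ is continuous, symmetric (P(v,w) = P(w,v) for all v,w), and bounded below, P(v,w) ≥ −a for all v,w with a ≥ 0. Let k_d, k_o solve the scaled Riccati system and assume k_d(t) − k_o(t)/N ≥ 0 for all t ∈ [0,T]. Let differentiable functions v_1,…,v_N, w_1,…,w_N : [0,T] → ℝ^d solve the open-loop coupled system with w_i(0) = v_i(0) for all i, and suppose the empirical variance σ_v²(t) = (1/N) Σ_{j=1}^N |v_j(t) − m_v(t)|², with m_v(t) = (1/N) Σ_{j=1}^N v_j(t), is strictly positive on [0,T]. Set κ(t) = k_d(t) − k_o(t)/N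 and β_N(t) = exp(−p̄ t − (1/ν) ∫₀ᵗ κ(s) ds). Then for all t ∈ [0,T]: σ_v²(t) ≤ σ_v²(0) e^{2at} (1 + (1/ν) ∫₀ᵗ e^{−as} κ(s) β_N(s) ds)². -/
open Set

section Aux

lemma aux_cs {E : Type*} [NormedAddCommGroup E] [InnerProductSpace ℝ E] {N : ℕ}
    (x y : Fin N → E) :
    ∑ j, (inner ℝ (x j) (y j) : ℝ) ≤
      Real.sqrt (∑ j, ‖x j‖ ^ 2) * Real.sqrt (∑ j, ‖y j‖ ^ 2) := by
  have h1 : ∑ j, (inner ℝ (x j) (y j) : ℝ) ≤ ∑ j, ‖x j‖ * ‖y j‖ :=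
    Finset.sum_le_sum fun j _ => real_inner_le_norm _ _
  refine h1.trans ?_
  have h2 : (∑ j, ‖x j‖ * ‖y j‖) ^ 2 ≤ (∑ j, ‖x j‖ ^ 2) * ∑ j, ‖y j‖ ^ 2 :=
    Finset.sum_mul_sq_le_sq_mul_sq _ _ _
  have h3 : (0:ℝ) ≤ ∑ j, ‖x j‖ * ‖y j‖ := Finset.sum_nonneg fun j _ => by positivity
  calc ∑ j, ‖x j‖ * ‖y j‖ = Real.sqrt ((∑ j, ‖x j‖ * ‖y j‖) ^ 2) := (Real.sqrt_sq h3).symm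
    _ ≤ Real.sqrt ((∑ j, ‖x j‖ ^ 2) * ∑ j, ‖y j‖ ^ 2) := Real.sqrt_le_sqrt h2
    _ = _ := Real.sqrt_mul (by positivity) _

lemma aux_sym {E : Type*} [NormedAddCommGroup E] [InnerProductSpace ℝ E] {N : ℕ}
    (u : Fin N → E) (hu : ∑ j, u j = 0) (Q : Fin N → Fin N → ℝ)
    (hQs : ∀ i j, Q i j = Q j i) (a : ℝ) (hQ : ∀ i j, -a ≤ Q i j) :
    ∑ j, ∑ k, Q j k * (inner ℝ (u j) (u k - u j) : ℝ) ≤ a * N * ∑ j, ‖u j‖ ^ 2 := by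
  have hswap : ∑ j, ∑ k, Q j k * (inner ℝ (u j) (u k - u j) : ℝ)
      = ∑ j, ∑ k, Q j k * (inner ℝ (u k) (u j - u k) : ℝ) := by
    rw [Finset.sum_comm]
    exact Finset.sum_congr rfl fun j _ => Finset.sum_congr rfl fun k _ => by rw [hQs]
  have hid : ∀ j k, (inner ℝ (u j) (u k - u j) : ℝ) + (inner ℝ (u k) (u j - u k) : ℝ)
      = -(‖u j - u k‖ ^ 2) := by
    intro j k
    have h := norm_sub_sq_real (u j) (u k)
    simp only [inner_sub_right, real_inner_self_eq_norm_sq] at *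
    have hc : (inner ℝ (u k) (u j) : ℝ) = inner ℝ (u j) (u k) := real_inner_comm _ _
    linarith
  have hkey : 2 * (∑ j, ∑ k, Q j k * (inner ℝ (u j) (u k - u j) : ℝ))
      = ∑ j, ∑ k, Q j k * (-(‖u j - u k‖ ^ 2)) := by
    rw [two_mul]
    nth_rewrite 2 [hswap]
    rw [← Finset.sum_add_distrib]
    refine Finset.sum_congr rfl fun j _ => ?_
    rw [← Finset.sum_add_distrib]
    refine Finset.sum_congr rfl fun k _ => ?_
    rw [← mul_add, hid]
  have hexp : ∑ j, ∑ k, (‖u j - u k‖ ^ 2 : ℝ) = 2 * N * ∑ j, ‖u j‖ ^ 2 := by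
    have h1 : ∀ j k, (‖u j - u k‖ ^ 2 : ℝ)
        = ‖u j‖ ^ 2 - 2 * inner ℝ (u j) (u k) + ‖u k‖ ^ 2 := fun j k => norm_sub_sq_real _ _
    have h2 : ∀ j, ∑ k, (inner ℝ (u j) (u k) : ℝ) = 0 := by
      intro j; rw [← inner_sum, hu, inner_zero_right]
    calc ∑ j, ∑ k, (‖u j - u k‖ ^ 2 : ℝ)
        = ∑ j, ((N:ℝ) * ‖u j‖ ^ 2 + ∑ k, ‖u k‖ ^ 2) := by
          refine Finset.sum_congr rfl fun j _ => ?_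
          simp_rw [h1]
          rw [Finset.sum_add_distrib, Finset.sum_sub_distrib, Finset.sum_const,
            Finset.card_univ, Fintype.card_fin, ← Finset.mul_sum, h2 j, nsmul_eq_mul]
          ring
      _ = 2 * N * ∑ j, ‖u j‖ ^ 2 := by
          rw [Finset.sum_add_distrib, ← Finset.mul_sum, Finset.sum_const, Finset.card_univ,
            Fintype.card_fin, nsmul_eq_mul]
          ring
  have hbound : ∑ j, ∑ k, Q j k * (-(‖u j - u k‖ ^ 2 : ℝ))
      ≤ ∑ j, ∑ k, a * ‖u j - u k‖ ^ 2 := by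
    refine Finset.sum_le_sum fun j _ => Finset.sum_le_sum fun k _ => ?_
    have hn : (0:ℝ) ≤ ‖u j - u k‖ ^ 2 := by positivity
    nlinarith [hQ j k]
  have hfin : ∑ j, ∑ k, a * (‖u j - u k‖ ^ 2 : ℝ) = a * (2 * N * ∑ j, ‖u j‖ ^ 2) := by
    simp_rw [← Finset.mul_sum]
    rw [hexp]
  nlinarith [hkey, hbound, hfin]

lemma aux_ode {E : Type*} [NormedAddCommGroup E] [NormedSpace ℝ E] {T : ℝ}
    {c C : ℝ → ℝ} {y : ℝ → E}
    (hC0 : C 0 = 0)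
    (hCc : ContinuousOn C (Icc 0 T))
    (hCd : ∀ x ∈ Ico (0:ℝ) T, HasDerivWithinAt C (c x) (Ici x) x)
    (hyc : ContinuousOn y (Icc 0 T))
    (hyd : ∀ x ∈ Ico (0:ℝ) T, HasDerivWithinAt y ((-(c x)) • y x) (Ici x) x) :
    ∀ t ∈ Icc (0:ℝ) T, y t = Real.exp (-(C t)) • y 0 := by
  set Φ : ℝ → E := fun r => Real.exp (C r) • y r with hΦ
  have hΦc : ContinuousOn Φ (Icc 0 T) :=
    (Real.continuous_exp.comp_continuousOn hCc).smul hyc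
  have hΦd : ∀ x ∈ Ico (0:ℝ) T, HasDerivWithinAt Φ 0 (Ici x) x := by
    intro x hx
    have h := ((hCd x hx).exp).smul (hyd x hx)
    convert h using 1
    · rfl
    rw [smul_smul, ← add_smul]
    have : Real.exp (C x) * (-(c x)) + Real.exp (C x) * c x = 0 := by ring
    rw [this, zero_smul]
  have hconst := constant_of_has_deriv_right_zero hΦc hΦd
  intro t ht
  have h := hconst t ht
  have h0 : Φ 0 = y 0 := by simp [hΦ, hC0]
  have : Real.exp (C t) • y t = y 0 := by rw [← h0]; exact h
  calc y t = Real.exp (-(C t)) • (Real.exp (C t) • y t) := by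
        rw [smul_smul, ← Real.exp_add, neg_add_cancel, Real.exp_zero, one_smul]
    _ = Real.exp (-(C t)) • y 0 := by rw [this]

end Aux

set_option maxHeartbeats 2000000 in
/-- Upper variance bound for the open-loop coupled system with
kernel bounded below by `−a`: with `κ = k_d − k_o/N ≥ 0` and
`β_N(t) = exp(−p̄t − (1/ν)∫₀ᵗ κ)`, the empirical variance of the nonlinear state
satisfies `σ_v²(t) ≤ σ_v²(0) e^{2at}(1 + (1/ν)∫₀ᵗ e^{−as} κ(s) β_N(s) ds)²`. -/
theorem open_loop_variance_upper_bound (N d : ℕ) (hN : 1 ≤ N) (hd : 1 ≤ d)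
    (T ν p a : ℝ) (hT : 0 < T) (hν : 0 < ν) (ha : 0 ≤ a)
    (P : EuclideanSpace ℝ (Fin d) → EuclideanSpace ℝ (Fin d) → ℝ)
    (hPcont : Continuous fun q : EuclideanSpace ℝ (Fin d) × EuclideanSpace ℝ (Fin d) =>
      P q.1 q.2)
    (hPsymm : ∀ v w, P v w = P w v)
    (hPlow : ∀ v w, -a ≤ P v w)
    (kd ko : ℝ → ℝ)
    (hkd : ∀ t ∈ Icc (0:ℝ) T, HasDerivAt kd
        (-(-2 * p * (((N : ℝ) - 1) / N) * (kd t - ko t / N)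
            - (1 / ν) * ((kd t) ^ 2 + ((((N : ℝ) - 1) / N) / N) * (ko t) ^ 2) + 1)) t)
    (hkdT : kd T = 0)
    (hko : ∀ t ∈ Icc (0:ℝ) T, HasDerivAt ko
        (-(2 * p * (kd t - ko t / N)
            - (1 / ν) * (2 * kd t * ko t + (((N : ℝ) - 1) / N) * (ko t) ^ 2
                - (ko t) ^ 2 / N))) t)
    (hkoT : ko T = 0)
    (κ : ℝ → ℝ) (hκ : ∀ t, κ t = kd t - ko t / N)
    (hκ0 : ∀ t ∈ Icc (0:ℝ) T, 0 ≤ κ t)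
    (βN : ℝ → ℝ)
    (hβN : ∀ t, βN t = Real.exp (-p * t - (1 / ν) * ∫ s in (0:ℝ)..t, κ s))
    (v w : Fin N → ℝ → EuclideanSpace ℝ (Fin d))
    (hv : ∀ t ∈ Icc (0:ℝ) T, ∀ i : Fin N,
        HasDerivAt (v i)
          ((N : ℝ)⁻¹ • ∑ j, P (v i t) (v j t) • (v j t - v i t)
            + (-(1 / ν)) • ((kd t - ko t / N) • w i t + (ko t / N) • ∑ j, w j t)) t)
    (hw : ∀ t ∈ Icc (0:ℝ) T, ∀ i : Fin N,
        HasDerivAt (w i)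
          ((N : ℝ)⁻¹ • ∑ j, p • (w j t - w i t)
            + (-(1 / ν)) • ((kd t - ko t / N) • w i t + (ko t / N) • ∑ j, w j t)) t)
    (hinit : ∀ i, w i 0 = v i 0)
    (mv : ℝ → EuclideanSpace ℝ (Fin d))
    (hmv : ∀ t, mv t = (N : ℝ)⁻¹ • ∑ j, v j t)
    (σ2v : ℝ → ℝ) (hσ2v : ∀ t, σ2v t = (N : ℝ)⁻¹ * ∑ j, ‖v j t - mv t‖ ^ 2)
    (hσ2vpos : ∀ t ∈ Icc (0:ℝ) T, 0 < σ2v t) :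
    ∀ t ∈ Icc (0:ℝ) T,
      σ2v t ≤ σ2v 0 * Real.exp (2 * a * t)
        * (1 + (1 / ν) * ∫ s in (0:ℝ)..t, Real.exp (-a * s) * κ s * βN s) ^ 2 := by
  have hN0 : (N:ℝ) ≠ 0 := Nat.cast_ne_zero.mpr (by omega)
  have hν0 : ν ≠ 0 := ne_of_gt hν
  have hβNpos : ∀ r, 0 < βN r := fun r => by rw [hβN]; exact Real.exp_pos _
  -- continuity of κ
  have hκfun : κ = fun r => kd r - ko r / N := funext hκ
  have hκca : ∀ s ∈ Icc (0:ℝ) T, ContinuousAt κ s := fun s hs => by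
    rw [hκfun]; exact (hkd s hs).continuousAt.sub ((hko s hs).continuousAt.div_const _)
  have hκco : ContinuousOn κ (Icc 0 T) := fun s hs => (hκca s hs).continuousWithinAt
  have hκint : ∀ s ∈ Icc (0:ℝ) T, IntervalIntegrable κ MeasureTheory.volume 0 s := by
    intro s hs
    apply ContinuousOn.intervalIntegrable
    apply hκco.mono
    rw [uIcc_of_le hs.1]
    exact Icc_subset_Icc le_rfl hs.2
  set F : ℝ → ℝ := fun r => ∫ x in (0:ℝ)..r, κ x with hF
  have hFc : ContinuousOn F (Icc 0 T) := by
    have h := intervalIntegral.continuousOn_primitive_interval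
      (f := κ) (a := 0) (b := T) (μ := MeasureTheory.volume)
      (by rw [uIcc_of_le hT.le]; exact hκco.integrableOn_Icc)
    rwa [uIcc_of_le hT.le] at h
  have hmeasIoo : MeasureTheory.AEStronglyMeasurable κ
      (MeasureTheory.volume.restrict (Ioo 0 T)) :=
    (hκco.mono Ioo_subset_Icc_self).aestronglyMeasurable measurableSet_Ioo
  have hFr : ∀ x ∈ Ico (0:ℝ) T, HasDerivWithinAt F (κ x) (Ici x) x := by
    intro x hx
    exact intervalIntegral.integral_hasDerivWithinAt_right (hκint x ⟨hx.1, hx.2.le⟩)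
      ⟨Ioo 0 T, Ioo_mem_nhdsGT_of_mem hx, hmeasIoo⟩
      ((hκca x ⟨hx.1, hx.2.le⟩).continuousWithinAt)
  have hFd : ∀ x ∈ Ioo (0:ℝ) T, HasDerivAt F (κ x) x := fun x hx =>
    intervalIntegral.integral_hasDerivAt_right (hκint x ⟨hx.1.le, hx.2.le⟩)
      ⟨Ioo 0 T, Ioo_mem_nhds hx.1 hx.2, hmeasIoo⟩ (hκca x ⟨hx.1.le, hx.2.le⟩)
  -- βN facts
  have hβNfun : βN = fun r => Real.exp (-p * r - (1/ν) * F r) := funext hβN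
  have hβNco : ContinuousOn βN (Icc 0 T) := by
    rw [hβNfun]
    exact Real.continuous_exp.comp_continuousOn
      (((continuous_const.mul continuous_id).continuousOn).sub (continuousOn_const.mul hFc))
  have hβNca : ∀ x ∈ Ioo (0:ℝ) T, ContinuousAt βN x := by
    intro x hx
    rw [hβNfun]
    exact Real.continuous_exp.continuousAt.comp
      (((continuous_const.mul continuous_id).continuousAt).sub
        (continuousAt_const.mul (hFd x hx).continuousAt))
  -- mean of w
  set mw : ℝ → EuclideanSpace ℝ (Fin d) := fun r => (N:ℝ)⁻¹ • ∑ j, w j r with hmw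
  have hmw0 : mw 0 = mv 0 := by
    rw [hmv]; show (N:ℝ)⁻¹ • ∑ j, w j 0 = (N:ℝ)⁻¹ • ∑ j, v j 0
    simp only [hinit]
  have hdev : ∀ (i : Fin N) (r : ℝ),
      (N:ℝ)⁻¹ • ∑ j, (w i r - w j r) = w i r - mw r := by
    intro i r
    rw [Finset.sum_sub_distrib, Finset.sum_const, Finset.card_univ, Fintype.card_fin,
      ← Nat.cast_smul_eq_nsmul ℝ, smul_sub, inv_smul_smul₀ hN0]
  -- pairwise differences of w solve a scalar linear ODE
  have hzd : ∀ (i j : Fin N), ∀ s ∈ Icc (0:ℝ) T, HasDerivAt (fun r => w i r - w j r)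
      ((-(p + (1/ν) * κ s)) • (w i s - w j s)) s := by
    intro i j s hs
    have h := (hw s hs i).sub (hw s hs j)
    refine h.congr_deriv ?_
    have hA : ∀ i' : Fin N, ∑ k, p • (w k s - w i' s)
        = p • (∑ k, w k s) - (N:ℝ) • (p • w i' s) := by
      intro i'
      rw [← Finset.smul_sum, Finset.sum_sub_distrib, Finset.sum_const, Finset.card_univ,
        Fintype.card_fin, ← Nat.cast_smul_eq_nsmul ℝ, smul_sub, smul_comm]
    rw [hA i, hA j, hκ]
    match_scalars <;> field_simp <;> ring
  -- closed form for pairwise differences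
  have hzform : ∀ (i j : Fin N), ∀ t' ∈ Icc (0:ℝ) T,
      w i t' - w j t' = βN t' • (w i 0 - w j 0) := by
    intro i j
    have hode := aux_ode (T := T) (c := fun x => p + (1/ν) * κ x)
      (C := fun r => p * r + (1/ν) * F r) (y := fun r => w i r - w j r)
      (by simp [hF, intervalIntegral.integral_same])
      (((continuous_const.mul continuous_id).continuousOn).add (continuousOn_const.mul hFc))
      (by
        intro x hx
        have h1 : HasDerivWithinAt (fun r : ℝ => p * r) p (Ici x) x := by
          simpa using ((hasDerivAt_id x).const_mul p).hasDerivWithinAt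
        exact h1.add ((hFr x hx).const_mul (1/ν)))
      (fun s hs => ((hw s hs i).continuousAt.sub (hw s hs j).continuousAt).continuousWithinAt)
      (fun x hx => (hzd i j x ⟨hx.1, hx.2.le⟩).hasDerivWithinAt)
    intro t' ht'
    have h := hode t' ht'
    rw [h, hβN]
    congr 2
    simp only [hF]
    ring
  -- closed form for w deviations
  have hwform : ∀ t' ∈ Icc (0:ℝ) T, ∀ i, w i t' - mw t' = βN t' • (v i 0 - mv 0) := by
    intro t' ht' i
    calc w i t' - mw t' = (N:ℝ)⁻¹ • ∑ j, (w i t' - w j t') := (hdev i t').symm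
      _ = (N:ℝ)⁻¹ • ∑ j, βN t' • (w i 0 - w j 0) := by
          congr 1; exact Finset.sum_congr rfl fun j _ => hzform i j t' ht'
      _ = βN t' • ((N:ℝ)⁻¹ • ∑ j, (w i 0 - w j 0)) := by
          rw [← Finset.smul_sum, smul_comm]
      _ = βN t' • (w i 0 - mw 0) := by rw [hdev i 0]
      _ = βN t' • (v i 0 - mv 0) := by rw [hinit, hmw0]
  -- sum of deviations of v vanishes
  have husum : ∀ r : ℝ, ∑ j, (v j r - mv r) = (0 : EuclideanSpace ℝ (Fin d)) := by
    intro r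
    rw [Finset.sum_sub_distrib, Finset.sum_const, Finset.card_univ, Fintype.card_fin, hmv,
      ← Nat.cast_smul_eq_nsmul ℝ, smul_inv_smul₀ hN0, sub_self]
  -- derivative of the variance with the key bound
  have hD : ∀ s ∈ Icc (0:ℝ) T, ∃ D : ℝ, HasDerivAt σ2v D s ∧
      D ≤ 2 * a * σ2v s
        + (2/ν) * (κ s * βN s) * (Real.sqrt (σ2v s) * Real.sqrt (σ2v 0)) := by
    intro s hs
    set Dv : Fin N → EuclideanSpace ℝ (Fin d) := fun i =>
      (N : ℝ)⁻¹ • ∑ j, P (v i s) (v j s) • (v j s - v i s)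
        + (-(1 / ν)) • ((kd s - ko s / N) • w i s + (ko s / N) • ∑ j, w j s) with hDv
    have hvd : ∀ i, HasDerivAt (v i) (Dv i) s := fun i => hv s hs i
    have hmvd : HasDerivAt mv ((N:ℝ)⁻¹ • ∑ i, Dv i) s := by
      have h := (HasDerivAt.fun_sum fun i (_ : i ∈ Finset.univ) => hvd i).const_smul ((N:ℝ)⁻¹)
      have hfun : mv = fun r => (N:ℝ)⁻¹ • ∑ j, v j r := funext hmv
      rw [hfun]; exact h
    set Dm : EuclideanSpace ℝ (Fin d) := (N:ℝ)⁻¹ • ∑ i, Dv i with hDm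
    have hud : ∀ j, HasDerivAt (fun r => v j r - mv r) (Dv j - Dm) s :=
      fun j => (hvd j).sub hmvd
    have hσd : HasDerivAt σ2v
        ((N:ℝ)⁻¹ * ∑ j, (2 * (inner ℝ (v j s - mv s) (Dv j - Dm) : ℝ))) s := by
      have hterm : ∀ j, HasDerivAt (fun r => ‖v j r - mv r‖ ^ 2)
          (2 * (inner ℝ (v j s - mv s) (Dv j - Dm) : ℝ)) s := by
        intro j
        have h := (hud j).inner ℝ (hud j)
        have heq : (fun r => (inner ℝ (v j r - mv r) (v j r - mv r) : ℝ))
            = fun r => ‖v j r - mv r‖ ^ 2 := by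
          funext r; exact real_inner_self_eq_norm_sq _
        rw [heq] at h
        refine h.congr_deriv ?_
        rw [real_inner_comm]; ring
      have h := (HasDerivAt.fun_sum fun j (_ : j ∈ Finset.univ) => hterm j).const_mul ((N:ℝ)⁻¹)
      have hfun : σ2v = fun r => (N:ℝ)⁻¹ * ∑ j, ‖v j r - mv r‖ ^ 2 := funext hσ2v
      rw [hfun]; exact h
    refine ⟨_, hσd, ?_⟩
    -- reduce to ∑ ⟪u j, Dv j⟫
    have hA : ∑ j, (2 * (inner ℝ (v j s - mv s) (Dv j - Dm) : ℝ))
        = 2 * ∑ j, (inner ℝ (v j s - mv s) (Dv j) : ℝ) := by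
      rw [← Finset.mul_sum]
      congr 1
      have h1 : ∑ j, (inner ℝ (v j s - mv s) (Dv j - Dm) : ℝ)
          = ∑ j, ((inner ℝ (v j s - mv s) (Dv j) : ℝ) - (inner ℝ (v j s - mv s) Dm : ℝ)) := by
        refine Finset.sum_congr rfl fun j _ => ?_
        rw [inner_sub_right]
      rw [h1, Finset.sum_sub_distrib, ← sum_inner, husum s, inner_zero_left, sub_zero]
    -- split Dv j
    have hsplit : ∀ j, (inner ℝ (v j s - mv s) (Dv j) : ℝ)
        = (N:ℝ)⁻¹ * (∑ k, P (v j s) (v k s) * (inner ℝ (v j s - mv s) (v k s - v j s) : ℝ))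
          - (1/ν) * ((kd s - ko s / N) * (inner ℝ (v j s - mv s) (w j s) : ℝ)
              + (ko s / N) * (inner ℝ (v j s - mv s) (∑ k, w k s) : ℝ)) := by
      intro j
      simp only [hDv, inner_add_right, inner_sum, real_inner_smul_right]
      ring
    -- w-term via closed form
    have hW : ∑ j, (inner ℝ (v j s - mv s) (w j s) : ℝ)
        = βN s * ∑ j, (inner ℝ (v j s - mv s) (v j 0 - mv 0) : ℝ) := by
      have hsplitw : ∀ j : Fin N, (inner ℝ (v j s - mv s) (w j s) : ℝ)
          = (inner ℝ (v j s - mv s) (w j s - mw s) : ℝ)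
            + (inner ℝ (v j s - mv s) (mw s) : ℝ) := by
        intro j
        rw [← inner_add_right]
        congr 1
        abel
      calc ∑ j, (inner ℝ (v j s - mv s) (w j s) : ℝ)
          = ∑ j, (inner ℝ (v j s - mv s) (w j s - mw s) : ℝ)
            + ∑ j, (inner ℝ (v j s - mv s) (mw s) : ℝ) := by
            rw [← Finset.sum_add_distrib]
            exact Finset.sum_congr rfl fun j _ => hsplitw j
        _ = ∑ j, (inner ℝ (v j s - mv s) (βN s • (v j 0 - mv 0)) : ℝ) + 0 := by
            rw [← sum_inner, husum s, inner_zero_left]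
            congr 1
            exact Finset.sum_congr rfl fun j _ => by rw [hwform s hs j]
        _ = βN s * ∑ j, (inner ℝ (v j s - mv s) (v j 0 - mv 0) : ℝ) := by
            rw [add_zero]
            simp only [real_inner_smul_right, ← Finset.mul_sum]
    have hsum1 : ∑ j, (inner ℝ (v j s - mv s) (Dv j) : ℝ)
        = (N:ℝ)⁻¹ * (∑ j, ∑ k, P (v j s) (v k s)
              * (inner ℝ (v j s - mv s) (v k s - v j s) : ℝ))
          - (1/ν) * ((kd s - ko s / N)
              * (βN s * ∑ j, (inner ℝ (v j s - mv s) (v j 0 - mv 0) : ℝ))) := by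
      have h0 : ∑ j, (inner ℝ (v j s - mv s) (∑ k, w k s) : ℝ) = 0 := by
        rw [← sum_inner, husum s, inner_zero_left]
      simp only [hsplit, Finset.sum_sub_distrib, Finset.sum_add_distrib,
        ← Finset.mul_sum]
      rw [h0, mul_zero, add_zero, hW]
    -- kernel bound
    have hP1 : ∑ j, ∑ k, P (v j s) (v k s) * (inner ℝ (v j s - mv s) (v k s - v j s) : ℝ)
        ≤ a * N * ∑ j, ‖v j s - mv s‖ ^ 2 := by
      have hrw : ∀ j k : Fin N, (inner ℝ (v j s - mv s) (v k s - v j s) : ℝ)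
          = (inner ℝ (v j s - mv s) ((v k s - mv s) - (v j s - mv s)) : ℝ) := by
        intro j k; congr 1; abel
      calc ∑ j, ∑ k, P (v j s) (v k s) * (inner ℝ (v j s - mv s) (v k s - v j s) : ℝ)
          = ∑ j, ∑ k, P (v j s) (v k s)
              * (inner ℝ (v j s - mv s) ((v k s - mv s) - (v j s - mv s)) : ℝ) := by
            exact Finset.sum_congr rfl fun j _ => Finset.sum_congr rfl fun k _ => by
              rw [hrw]
        _ ≤ a * N * ∑ j, ‖v j s - mv s‖ ^ 2 :=
            aux_sym (fun j => v j s - mv s) (husum s) (fun j k => P (v j s) (v k s))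
              (fun i j => hPsymm _ _) a (fun i j => hPlow _ _)
    -- Cauchy–Schwarz bound
    set Sn : ℝ := ∑ j, ‖v j s - mv s‖ ^ 2 with hSn
    set Sn0 : ℝ := ∑ j, ‖v j 0 - mv 0‖ ^ 2 with hSn0
    set Ip : ℝ := ∑ j, (inner ℝ (v j s - mv s) (v j 0 - mv 0) : ℝ) with hIp
    have hCS : -Ip ≤ Real.sqrt Sn * Real.sqrt Sn0 := by
      have h := aux_cs (fun j => v j s - mv s) (fun j => -(v j 0 - mv 0))
      simp only [inner_neg_right, norm_neg] at h
      rw [Finset.sum_neg_distrib] at h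
      exact h
    have hcoef : 0 ≤ (1/ν) * (κ s * βN s) :=
      mul_nonneg (by positivity) (mul_nonneg (hκ0 s hs) (hβNpos s).le)
    have hs1 : ∑ j, (inner ℝ (v j s - mv s) (Dv j) : ℝ)
        ≤ a * Sn + (1/ν) * (κ s * βN s) * (Real.sqrt Sn * Real.sqrt Sn0) := by
      rw [hsum1, ← hκ s]
      have hP2 : (N:ℝ)⁻¹ * (∑ j, ∑ k, P (v j s) (v k s)
            * (inner ℝ (v j s - mv s) (v k s - v j s) : ℝ))
          ≤ (N:ℝ)⁻¹ * (a * N * Sn) :=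
        mul_le_mul_of_nonneg_left hP1 (by positivity)
      have e1 : (N:ℝ)⁻¹ * (a * (N:ℝ) * Sn) = a * Sn := by field_simp
      rw [e1] at hP2
      linarith [hP2, mul_le_mul_of_nonneg_left hCS hcoef]
    -- assemble
    have hSnσ : σ2v s = (N:ℝ)⁻¹ * Sn := hσ2v s
    have hSn0σ : σ2v 0 = (N:ℝ)⁻¹ * Sn0 := hσ2v 0
    have hNsqrt : Real.sqrt (σ2v s) * Real.sqrt (σ2v 0)
        = (N:ℝ)⁻¹ * (Real.sqrt Sn * Real.sqrt Sn0) := by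
      rw [hSnσ, hSn0σ, Real.sqrt_mul (by positivity) Sn, Real.sqrt_mul (by positivity) Sn0]
      have h := Real.mul_self_sqrt (show (0:ℝ) ≤ (N:ℝ)⁻¹ by positivity)
      calc Real.sqrt ((N:ℝ)⁻¹) * Real.sqrt Sn * (Real.sqrt ((N:ℝ)⁻¹) * Real.sqrt Sn0)
          = (Real.sqrt ((N:ℝ)⁻¹) * Real.sqrt ((N:ℝ)⁻¹)) * (Real.sqrt Sn * Real.sqrt Sn0) := by
            ring
        _ = (N:ℝ)⁻¹ * (Real.sqrt Sn * Real.sqrt Sn0) := by rw [h]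
    rw [hA]
    calc (N:ℝ)⁻¹ * (2 * ∑ j, (inner ℝ (v j s - mv s) (Dv j) : ℝ))
        ≤ (N:ℝ)⁻¹ * (2 * (a * Sn + (1/ν) * (κ s * βN s)
            * (Real.sqrt Sn * Real.sqrt Sn0))) := by
          apply mul_le_mul_of_nonneg_left _ (by positivity)
          linarith [hs1]
      _ = 2 * a * σ2v s + (2/ν) * (κ s * βN s)
            * (Real.sqrt (σ2v s) * Real.sqrt (σ2v 0)) := by
          rw [hNsqrt, hSnσ]; ring
  -- continuity of σ2v
  have hσ2vco : ContinuousOn σ2v (Icc 0 T) :=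
    fun s hs => ((hD s hs).choose_spec.1.continuousAt).continuousWithinAt
  have hsq0 : (0:ℝ) ≤ σ2v 0 := (hσ2vpos 0 (left_mem_Icc.mpr hT.le)).le
  -- the integrand g and its primitive I
  set g : ℝ → ℝ := fun r => Real.exp (-a*r) * κ r * βN r with hg
  have hgco : ContinuousOn g (Icc 0 T) :=
    (((Real.continuous_exp.comp (continuous_const.mul continuous_id)).continuousOn.mul
      hκco).mul hβNco)
  set I : ℝ → ℝ := fun r => ∫ x in (0:ℝ)..r, g x with hI
  have hIco : ContinuousOn I (Icc 0 T) := by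
    have h := intervalIntegral.continuousOn_primitive_interval
      (f := g) (a := 0) (b := T) (μ := MeasureTheory.volume)
      (by rw [uIcc_of_le hT.le]; exact hgco.integrableOn_Icc)
    rwa [uIcc_of_le hT.le] at h
  have hgint : ∀ s ∈ Icc (0:ℝ) T, IntervalIntegrable g MeasureTheory.volume 0 s := by
    intro s hs
    apply ContinuousOn.intervalIntegrable
    apply hgco.mono
    rw [uIcc_of_le hs.1]
    exact Icc_subset_Icc le_rfl hs.2
  have hId : ∀ x ∈ Ioo (0:ℝ) T, HasDerivAt I (g x) x := by
    intro x hx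
    exact intervalIntegral.integral_hasDerivAt_right (hgint x ⟨hx.1.le, hx.2.le⟩)
      ⟨Ioo 0 T, Ioo_mem_nhds hx.1 hx.2,
        (hgco.mono Ioo_subset_Icc_self).aestronglyMeasurable measurableSet_Ioo⟩
      (((Real.continuous_exp.comp (continuous_const.mul continuous_id)).continuousAt.mul
        (hκca x ⟨hx.1.le, hx.2.le⟩)).mul (hβNca x hx))
  -- the comparison function G
  set G : ℝ → ℝ := fun r => Real.exp (-a*r) * Real.sqrt (σ2v r)
      - Real.sqrt (σ2v 0) * (1 + (1/ν) * I r) with hG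
  have hGco : ContinuousOn G (Icc 0 T) := by
    apply ContinuousOn.sub
    · exact ((Real.continuous_exp.comp (continuous_const.mul continuous_id)).continuousOn).mul
        (Real.continuous_sqrt.comp_continuousOn hσ2vco)
    · exact continuousOn_const.mul (continuousOn_const.add (continuousOn_const.mul hIco))
  have hGkey : ∀ x ∈ Ioo (0:ℝ) T, ∃ G', HasDerivAt G G' x ∧ G' ≤ 0 := by
    intro x hx
    have hxIcc : x ∈ Icc (0:ℝ) T := Ioo_subset_Icc_self hx
    obtain ⟨D, hDd, hDle⟩ := hD x hxIcc
    have hσpos := hσ2vpos x hxIcc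
    have hsqd : HasDerivAt (fun r => Real.sqrt (σ2v r)) (1/(2*Real.sqrt (σ2v x)) * D) x :=
      (Real.hasDerivAt_sqrt (ne_of_gt hσpos)).comp x hDd
    have hlin : HasDerivAt (fun r : ℝ => -a * r) (-a) x := by
      simpa using (hasDerivAt_id x).const_mul (-a)
    have hexpd : HasDerivAt (fun r => Real.exp (-a*r)) (Real.exp (-a*x) * (-a)) x := hlin.exp
    have hGd : HasDerivAt G
        (Real.exp (-a*x) * (-a) * Real.sqrt (σ2v x)
          + Real.exp (-a*x) * (1/(2*Real.sqrt (σ2v x)) * D)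
          - Real.sqrt (σ2v 0) * ((1/ν) * g x)) x := by
      have h1 := hexpd.mul hsqd
      have h2 : HasDerivAt (fun r => Real.sqrt (σ2v 0) * (1 + (1/ν) * I r))
          (Real.sqrt (σ2v 0) * ((1/ν) * g x)) x :=
        ((((hId x hx).const_mul (1/ν)).const_add 1).const_mul (Real.sqrt (σ2v 0)))
      exact h1.sub h2
    refine ⟨_, hGd, ?_⟩
    have hsq : 0 < Real.sqrt (σ2v x) := Real.sqrt_pos.mpr hσpos
    have hEx : 0 < Real.exp (-a*x) := Real.exp_pos _
    have hss : Real.sqrt (σ2v x) * Real.sqrt (σ2v x) = σ2v x := Real.mul_self_sqrt hσpos.le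
    have hβpos : 0 < βN x := hβNpos x
    have hκx : 0 ≤ κ x := hκ0 x hxIcc
    have hsq0' : 0 ≤ Real.sqrt (σ2v 0) := Real.sqrt_nonneg _
    have hdiv : 1/(2*Real.sqrt (σ2v x)) * D
        ≤ a * Real.sqrt (σ2v x) + (1/ν)*(κ x * βN x)*Real.sqrt (σ2v 0) := by
      rw [show 1/(2*Real.sqrt (σ2v x)) * D = D / (2*Real.sqrt (σ2v x)) by ring,
        div_le_iff₀ (by positivity)]
      calc D ≤ 2*a*σ2v x + (2/ν)*(κ x * βN x)*(Real.sqrt (σ2v x)*Real.sqrt (σ2v 0)) := hDle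
        _ = (a * Real.sqrt (σ2v x) + (1/ν)*(κ x * βN x)*Real.sqrt (σ2v 0))
              * (2*Real.sqrt (σ2v x)) := by linear_combination (-(2*a)) * hss
    have hgx : g x = Real.exp (-a*x) * κ x * βN x := rfl
    have hstep := mul_le_mul_of_nonneg_left hdiv hEx.le
    rw [hgx]
    nlinarith [hstep]
  have hGanti : AntitoneOn G (Icc 0 T) := by
    apply antitoneOn_of_deriv_nonpos (convex_Icc 0 T) hGco
    · intro x hx
      rw [interior_Icc] at hx
      obtain ⟨G', hGd, _⟩ := hGkey x hx
      exact hGd.differentiableAt.differentiableWithinAt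
    · intro x hx
      rw [interior_Icc] at hx
      obtain ⟨G', hGd, hle⟩ := hGkey x hx
      rw [hGd.deriv]; exact hle
  intro t ht
  have hG0 : G 0 = 0 := by
    show Real.exp (-a*0) * Real.sqrt (σ2v 0)
        - Real.sqrt (σ2v 0) * (1 + (1/ν) * ∫ x in (0:ℝ)..(0:ℝ), g x) = 0
    rw [intervalIntegral.integral_same]
    norm_num
  have hGle : G t ≤ 0 := by
    rw [← hG0]
    exact hGanti (left_mem_Icc.mpr hT.le) ht ht.1
  have hle : Real.exp (-a*t) * Real.sqrt (σ2v t)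
      ≤ Real.sqrt (σ2v 0) * (1 + (1/ν) * I t) := by
    have : Real.exp (-a*t) * Real.sqrt (σ2v t)
        - Real.sqrt (σ2v 0) * (1 + (1/ν) * I t) ≤ 0 := hGle
    linarith
  have hInn : 0 ≤ I t := by
    apply intervalIntegral.integral_nonneg ht.1
    intro u hu
    exact mul_nonneg (mul_nonneg (Real.exp_nonneg _)
      (hκ0 u ⟨hu.1, hu.2.trans ht.2⟩)) (hβNpos u).le
  have hBnn : (0:ℝ) ≤ 1 + (1/ν) * I t := by
    have : 0 ≤ (1/ν) * I t := mul_nonneg (by positivity) hInn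
    linarith
  have hσtnn : (0:ℝ) ≤ σ2v t := (hσ2vpos t ht).le
  have hkey2 : Real.exp (-a*t) * Real.exp (-a*t) * σ2v t
      ≤ σ2v 0 * (1 + (1/ν) * I t)^2 := by
    have h1 := mul_self_le_mul_self
      (mul_nonneg (Real.exp_nonneg _) (Real.sqrt_nonneg _)) hle
    have e1 : Real.exp (-a*t) * Real.sqrt (σ2v t) * (Real.exp (-a*t) * Real.sqrt (σ2v t))
        = Real.exp (-a*t) * Real.exp (-a*t) * σ2v t := by
      linear_combination (Real.exp (-a*t) * Real.exp (-a*t)) * (Real.mul_self_sqrt hσtnn)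
    have e2 : Real.sqrt (σ2v 0) * (1 + (1/ν) * I t)
          * (Real.sqrt (σ2v 0) * (1 + (1/ν) * I t))
        = σ2v 0 * (1 + (1/ν) * I t)^2 := by
      linear_combination ((1 + (1/ν) * I t)^2) * (Real.mul_self_sqrt hsq0)
    rw [e1, e2] at h1
    exact h1
  have hEσ : Real.exp (2*a*t) * (Real.exp (-a*t) * Real.exp (-a*t) * σ2v t) = σ2v t := by
    have h : Real.exp (2*a*t) * (Real.exp (-a*t) * Real.exp (-a*t)) = 1 := by
      rw [← Real.exp_add, ← Real.exp_add, show 2*a*t + (-a*t + -a*t) = 0 by ring,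
        Real.exp_zero]
    linear_combination σ2v t * h
  have hfinal : σ2v t ≤ σ2v 0 * Real.exp (2*a*t) * (1 + (1/ν) * I t)^2 := by
    have h := mul_le_mul_of_nonneg_left hkey2 (Real.exp_pos (2*a*t)).le
    rw [hEσ] at h
    exact h.trans_eq (by ring)
  exact hfinal
end
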